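/- arXiv:0904.1458 — 12 statements merged into one kernel-verified Lean document; each statement's English description precedes it below -/
import Mathlib

section
/- If X is a paracompact topological space and G is a topological group, then for any open neighborhood U of the graph of the constant map x ↦ e in X × G, there exists an open neighborhood V of this graph such that the set V·V = {(x, yz) : (x,y) ∈ V, (x,z) ∈ V} is contained in U. -/
/-- If X is a paracompact (Hausdorff) space and G a topological group,
then any open neighborhood U of the graph of the constant map x ↦ e contains a
neighborhood V of that graph with V·V ⊆ U, where
V·V = {(x, yz) : (x,y) ∈ V, (x,z) ∈ V}. -/
theorem stmt0 {X G : Type*} [TopologicalSpace X] [T2Space X] [ParacompactSpace X]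
    [TopologicalSpace G] [Group G] [IsTopologicalGroup G]
    (U : Set (X × G)) (hU : IsOpen U) (hgr : ∀ x : X, (x, (1 : G)) ∈ U) :
    ∃ V : Set (X × G), IsOpen V ∧ (∀ x : X, (x, (1 : G)) ∈ V) ∧
      {p : X × G | ∃ y z : G, (p.1, y) ∈ V ∧ (p.1, z) ∈ V ∧ p.2 = y * z} ⊆ U := by
  classical
  -- Step 1: for each x, find open A ∋ x and open N ∋ 1 with A × (N*N) ⊆ U
  have key : ∀ x : X, ∃ A : Set X, ∃ N : Set G, IsOpen A ∧ x ∈ A ∧ IsOpen N ∧ (1 : G) ∈ N ∧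
      ∀ q ∈ A, ∀ y ∈ N, ∀ z ∈ N, (q, y * z) ∈ U := by
    intro x
    have hf : Continuous fun p : X × G × G => (p.1, p.2.1 * p.2.2) := by fun_prop
    have hUo : IsOpen ((fun p : X × G × G => (p.1, p.2.1 * p.2.2)) ⁻¹' U) := hU.preimage hf
    have hx : (x, ((1 : G), (1 : G))) ∈ (fun p : X × G × G => (p.1, p.2.1 * p.2.2)) ⁻¹' U := by
      simp only [Set.mem_preimage, mul_one]
      exact hgr x
    obtain ⟨A, T, hA, hT, hxA, hT1, hsub⟩ := isOpen_prod_iff.mp hUo x (1, 1) hx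
    obtain ⟨N1, N2, hN1, hN2, h11, h12, hNsub⟩ := isOpen_prod_iff.mp hT 1 1 hT1
    refine ⟨A, N1 ∩ N2, hA, hxA, hN1.inter hN2, ⟨h11, h12⟩, ?_⟩
    intro q hq y hy z hz
    exact hsub (Set.mk_mem_prod hq (hNsub (Set.mk_mem_prod hy.1 hz.2)) : (q, (y, z)) ∈ A ×ˢ T)
  choose A N hAo hxA hNo hN1 hAN using key
  -- Step 2: locally finite precise refinement of the cover A
  obtain ⟨v, hvo, hvU, hvlf, hvA⟩ := precise_refinement A hAo
    (Set.iUnion_eq_univ_iff.2 fun x => ⟨x, hxA x⟩)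
  -- Step 3: for each p, a small open nbhd C p meeting only finitely many v i
  have hsel : ∀ p : X, ∃ C : Set X, IsOpen C ∧ p ∈ C ∧ (∃ i, C ⊆ v i) ∧
      {i | (v i ∩ C).Nonempty}.Finite := by
    intro p
    obtain ⟨t, ht, htf⟩ := hvlf p
    obtain ⟨i, hi⟩ := Set.iUnion_eq_univ_iff.1 hvU p |>.imp fun i h => h
    refine ⟨interior t ∩ v i, isOpen_interior.inter (hvo i), ⟨mem_interior_iff_mem_nhds.2 ht, hi⟩,
      ⟨i, Set.inter_subset_right⟩, ?_⟩
    refine htf.subset fun j hj => ?_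
    obtain ⟨q, hq1, hq2⟩ := hj
    exact ⟨q, hq1, interior_subset hq2.1⟩
  choose C hCo hpC hCsub hCfin using hsel
  -- M p : intersection of N i over the finitely many i with v i meeting C p
  set M : X → Set G := fun p => ⋂ i ∈ {i | (v i ∩ C p).Nonempty}, N i with hM
  have hMo : ∀ p, IsOpen (M p) := fun p =>
    (hCfin p).isOpen_biInter fun i _ => hNo i
  have hM1 : ∀ p, (1 : G) ∈ M p := fun p => Set.mem_iInter₂.2 fun i _ => hN1 i
  have hMsub : ∀ p i, (v i ∩ C p).Nonempty → M p ⊆ N i := fun p i h =>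
    Set.biInter_subset_of_mem h
  refine ⟨⋃ p, C p ×ˢ M p, isOpen_iUnion fun p => (hCo p).prod (hMo p), fun x =>
    Set.mem_iUnion.2 ⟨x, hpC x, hM1 x⟩, ?_⟩
  rintro ⟨q, w⟩ ⟨y, z, hy, hz, rfl⟩
  obtain ⟨a, hqa, hya⟩ := Set.mem_iUnion.1 hy
  obtain ⟨b, hqb, hzb⟩ := Set.mem_iUnion.1 hz
  obtain ⟨i, hib⟩ := hCsub b
  have hqvi : q ∈ v i := hib hqb
  have hy' : y ∈ N i := hMsub a i ⟨q, hqvi, hqa⟩ hya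
  have hz' : z ∈ N i := hMsub b i ⟨q, hqvi, hqb⟩ hzb
  exact hAN i q (hvA i hqvi) y hy' z hz'
end

section
/- Let X and G be topological spaces with G a topological group. On C(X,G) with the Whitney (graph) topology, the inversion map f ↦ f⁻¹ (pointwise inversion) is continuous. -/
/-- The Whitney (graph) topology on `C(X, Y)`, generated by the sets
`⟨U⟩ = {f | graph f ⊆ U}` for `U` open in `X × Y`. -/
def whitneyTopology (X Y : Type*) [TopologicalSpace X] [TopologicalSpace Y] :
    TopologicalSpace C(X, Y) :=
  TopologicalSpace.generateFrom
    {S | ∃ U : Set (X × Y), IsOpen U ∧ S = {f : C(X, Y) | ∀ x : X, (x, f x) ∈ U}}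

/-- pointwise inversion is continuous on `C(X, G)` with the Whitney topology. -/
theorem stmt1 {X G : Type*} [TopologicalSpace X] [TopologicalSpace G] [Group G]
    [IsTopologicalGroup G] :
    @Continuous C(X, G) C(X, G) (whitneyTopology X G) (whitneyTopology X G)
      (fun f => f⁻¹) := by
  letI : TopologicalSpace C(X, G) := whitneyTopology X G
  rw [show whitneyTopology X G = TopologicalSpace.generateFrom _ from rfl,
    continuous_generateFrom_iff]
  rintro S ⟨U, hU, rfl⟩
  have : (fun f : C(X, G) => f⁻¹) ⁻¹' {f : C(X, G) | ∀ x, (x, f x) ∈ U}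
      = {f : C(X, G) | ∀ x, (x, f x) ∈ (fun p : X × G => (p.1, p.2⁻¹)) ⁻¹' U} := by
    ext f
    simp [Set.mem_preimage]
  rw [this]
  exact TopologicalSpace.isOpen_generateFrom_of_mem
    ⟨_, hU.preimage (continuous_fst.prodMk continuous_snd.inv), rfl⟩
end

section
/- Let X and G be topological spaces with G a topological group, and fix f ∈ C(X,G). On C(X,G) with the Whitney (graph) topology, the left multiplication map g ↦ f·g (pointwise product) is continuous. -/
/-- left multiplication by a fixed `f` is continuous on `C(X, G)`
with the Whitney topology. -/
theorem stmt2 {X G : Type*} [TopologicalSpace X] [TopologicalSpace G] [Group G]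
    [IsTopologicalGroup G] (f : C(X, G)) :
    @Continuous C(X, G) C(X, G) (whitneyTopology X G) (whitneyTopology X G)
      (fun g => f * g) := by
  letI := whitneyTopology X G
  rw [whitneyTopology, continuous_generateFrom_iff]
  rintro S ⟨U, hU, rfl⟩
  have key : (fun g : C(X, G) => f * g) ⁻¹' {h : C(X, G) | ∀ x, (x, h x) ∈ U}
      = {g : C(X, G) | ∀ x, (x, g x) ∈ (fun p : X × G => (p.1, f p.1 * p.2)) ⁻¹' U} := by
    ext g
    simp [ContinuousMap.mul_apply]
  rw [key]
  exact TopologicalSpace.isOpen_generateFrom_of_mem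
    ⟨_, hU.preimage (by continuity), rfl⟩
end

section
/- If X is a paracompact Hausdorff space and G is a topological group, then C(X,G) with the Whitney (graph) topology and pointwise multiplication is a topological group. -/
open Set Topology

/-- Key combinatorial lemma via paracompactness: a graph neighborhood of a pointwise
product can be split into graph neighborhoods of the factors. -/
lemma whitney_mul_key {X G : Type*} [TopologicalSpace X] [T2Space X] [ParacompactSpace X]
    [TopologicalSpace G] [Group G] [IsTopologicalGroup G]
    (U : Set (X × G)) (hU : IsOpen U) (f g : C(X, G))
    (hfg : ∀ x, (x, f x * g x) ∈ U) :
    ∃ V W : Set (X × G), IsOpen V ∧ IsOpen W ∧ (∀ x, (x, f x) ∈ V) ∧ (∀ x, (x, g x) ∈ W) ∧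
      ∀ (f' g' : C(X, G)), (∀ x, (x, f' x) ∈ V) → (∀ x, (x, g' x) ∈ W) →
        ∀ x, (x, f' x * g' x) ∈ U := by
  -- Step 1: pointwise data
  have h1 : ∀ x : X, ∃ (N : Set X) (A B : Set G), IsOpen N ∧ x ∈ N ∧ IsOpen A ∧ IsOpen B ∧
      MapsTo f N A ∧ MapsTo g N B ∧ ∀ y ∈ N, ∀ a ∈ A, ∀ b ∈ B, (y, a * b) ∈ U := by
    intro x
    have hφ : Continuous fun p : X × G × G => (p.1, p.2.1 * p.2.2) :=
      continuous_fst.prodMk (continuous_fst.comp continuous_snd |>.mul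
        (continuous_snd.comp continuous_snd))
    have hmem : (fun p : X × G × G => (p.1, p.2.1 * p.2.2)) ⁻¹' U ∈ 𝓝 (x, (f x, g x)) :=
      (hU.preimage hφ).mem_nhds (hfg x)
    rw [mem_nhds_prod_iff'] at hmem
    obtain ⟨N₀, T, hN₀o, hxN₀, hTo, hT, hNT⟩ := hmem
    have hT' : T ∈ 𝓝 (f x, g x) := hTo.mem_nhds hT
    rw [mem_nhds_prod_iff'] at hT'
    obtain ⟨A, B, hAo, hfA, hBo, hgB, hAB⟩ := hT'
    refine ⟨N₀ ∩ f ⁻¹' A ∩ g ⁻¹' B, A, B,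
      (hN₀o.inter (hAo.preimage f.continuous)).inter (hBo.preimage g.continuous),
      ⟨⟨hxN₀, hfA⟩, hgB⟩, hAo, hBo, fun y hy => hy.1.2, fun y hy => hy.2, ?_⟩
    intro y hy a ha b hb
    exact hNT (mk_mem_prod hy.1.1 (hAB (mk_mem_prod ha hb)))
  choose N A B hNo hNx hAo hBo hfN hgN hprod using h1
  -- Step 2: precise locally finite refinement
  have hNcov : ⋃ x, N x = univ := eq_univ_of_forall fun x => mem_iUnion.2 ⟨x, hNx x⟩
  obtain ⟨v, hvo, hvcov, hvlf, hvN⟩ := precise_refinement N hNo hNcov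
  -- Step 3: closed shrinking
  obtain ⟨w, hwcov, hwo, hwv⟩ := exists_subset_iUnion_closure_subset isClosed_univ hvo
    (fun x _ => hvlf.point_finite x) (by rw [hvcov])
  -- Step 4: define V and W
  set V : Set (X × G) := {p | ∀ x, p.1 ∈ closure (w x) → p.2 ∈ A x} with hV
  set W : Set (X × G) := {p | ∀ x, p.1 ∈ closure (w x) → p.2 ∈ B x} with hW
  have hclf : LocallyFinite fun x => closure (w x) := hvlf.subset hwv
  have hopen : ∀ (C : X → Set G), (∀ x, IsOpen (C x)) →
      IsOpen {p : X × G | ∀ x, p.1 ∈ closure (w x) → p.2 ∈ C x} := by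
    intro C hCo
    have hcl : IsClosed (⋃ x, closure (w x) ×ˢ (C x)ᶜ) := by
      refine LocallyFinite.isClosed_iUnion ?_
        (fun x => isClosed_closure.prod (hCo x).isClosed_compl)
      exact (hclf.preimage_continuous continuous_fst).subset
        (fun x => prod_subset_preimage_fst _ _)
    have : {p : X × G | ∀ x, p.1 ∈ closure (w x) → p.2 ∈ C x}
        = (⋃ x, closure (w x) ×ˢ (C x)ᶜ)ᶜ := by
      ext p
      simp only [mem_setOf_eq, mem_compl_iff, mem_iUnion, mem_prod, mem_compl_iff, not_exists,
        not_and, not_not]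
    rw [this]
    exact hcl.isOpen_compl
  have hclN : ∀ x, closure (w x) ⊆ N x := fun x => (hwv x).trans (hvN x)
  refine ⟨V, W, hopen A hAo, hopen B hBo, ?_, ?_, ?_⟩
  · exact fun y x hyx => hfN x (hclN x hyx)
  · exact fun y x hyx => hgN x (hclN x hyx)
  · intro f' g' hf' hg' y
    obtain ⟨x, hyx⟩ := mem_iUnion.1 (hwcov (mem_univ y))
    have hycl : y ∈ closure (w x) := subset_closure hyx
    exact hprod x y (hclN x hycl) _ (hf' y x hycl) _ (hg' y x hycl)

/-- for X paracompact Hausdorff and G a topological group, `C(X, G)`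
with the Whitney topology and pointwise operations is a topological group. -/
theorem stmt3 {X G : Type*} [TopologicalSpace X] [T2Space X] [ParacompactSpace X]
    [TopologicalSpace G] [Group G] [IsTopologicalGroup G] :
    @IsTopologicalGroup C(X, G) (whitneyTopology X G) _ := by
  letI := whitneyTopology X G
  have hbasic : ∀ U : Set (X × G), IsOpen U →
      IsOpen[whitneyTopology X G] {f : C(X, G) | ∀ x, (x, f x) ∈ U} :=
    fun U hU => TopologicalSpace.GenerateOpen.basic _ ⟨U, hU, rfl⟩
  have hmul : Continuous fun p : C(X, G) × C(X, G) => p.1 * p.2 := by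
    apply continuous_generateFrom_iff.mpr
    rintro S ⟨U, hU, rfl⟩
    rw [isOpen_iff_mem_nhds]
    rintro ⟨f, g⟩ hfg
    simp only [Set.mem_preimage, Set.mem_setOf_eq, ContinuousMap.mul_apply] at hfg
    obtain ⟨V, W, hVo, hWo, hfV, hgW, hkey⟩ := whitney_mul_key U hU f g hfg
    have hmem : {f' : C(X, G) | ∀ x, (x, f' x) ∈ V} ×ˢ {g' : C(X, G) | ∀ x, (x, g' x) ∈ W}
        ∈ 𝓝 (f, g) :=
      prod_mem_nhds ((hbasic V hVo).mem_nhds hfV) ((hbasic W hWo).mem_nhds hgW)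
    refine Filter.mem_of_superset hmem ?_
    rintro ⟨f', g'⟩ ⟨h1, h2⟩
    exact hkey f' g' h1 h2
  have hinv : Continuous fun f : C(X, G) => f⁻¹ := by
    apply continuous_generateFrom_iff.mpr
    rintro S ⟨U, hU, rfl⟩
    have hVo : IsOpen ((fun p : X × G => (p.1, p.2⁻¹)) ⁻¹' U) :=
      hU.preimage (continuous_fst.prodMk continuous_snd.inv)
    have : (fun f : C(X, G) => f⁻¹) ⁻¹' {f | ∀ x, (x, f x) ∈ U}
        = {f : C(X, G) | ∀ x, (x, f x) ∈ (fun p : X × G => (p.1, p.2⁻¹)) ⁻¹' U} := by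
      ext f
      simp [ContinuousMap.inv_apply]
    rw [this]
    exact hbasic _ hVo
  exact { continuous_mul := hmul, continuous_inv := hinv }
end

section
/- Let (Gᵢ)ᵢ∈ℕ be an increasing sequence of closed subgroups of a topological group G with union G. Then the multiplication map p : ⊡ᵢ Gᵢ → G, p(x₁,...,xₙ, e, e, ...) = x₁x₂⋯xₙ, from the small box product to G, is continuous. -/
/-- The box topology on a countable product, generated by boxes `∏ᵢ Uᵢ`. -/
def boxTopology (X : ℕ → Type*) [∀ i, TopologicalSpace (X i)] :
    TopologicalSpace (∀ i, X i) :=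
  TopologicalSpace.generateFrom
    {S | ∃ U : ∀ i, Set (X i), (∀ i, IsOpen (U i)) ∧ S = Set.pi Set.univ U}

/-- The small box product of a tower of subgroups: sequences that are
eventually the identity. -/
abbrev SmallBox {G : Type*} [Group G] (H : ℕ → Subgroup G) : Type _ :=
  {x : ∀ i, H i // ∃ N, ∀ i ≥ N, x i = 1}

/-- The topology on the small box product: the subspace topology of the box
topology. -/
def smallBoxTop {G : Type*} [Group G] [TopologicalSpace G] (H : ℕ → Subgroup G) :
    TopologicalSpace (SmallBox H) :=
  TopologicalSpace.induced Subtype.val (boxTopology fun i => H i)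

/-- The multiplication map `p : ⊡ᵢ Gᵢ → G`, `p(x₁,…,xₙ,e,e,…) = x₁x₂⋯xₙ`. -/
noncomputable def boxMulMap {G : Type*} [Group G] (H : ℕ → Subgroup G)
    (x : SmallBox H) : G :=
  ((List.range x.2.choose).map fun i => ((x.1 i : G))).prod

/-- The identity element `(e, e, …)` of the small box product. -/
def boxOne {G : Type*} [Group G] (H : ℕ → Subgroup G) : SmallBox H :=
  ⟨1, 0, fun _ _ => rfl⟩

section Aux

open Pointwise

variable {G : Type*} [Group G]

/-- The product of the first `n` values of a sequence. -/
def plAux (v : ℕ → G) (n : ℕ) : G := ((List.range n).map v).prod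

lemma plAux_succ (v : ℕ → G) (n : ℕ) : plAux v (n + 1) = plAux v n * v n := by
  simp [plAux, List.range_succ]

lemma plAux_shift (v : ℕ → G) (n : ℕ) :
    plAux v (n + 1) = v 0 * plAux (fun i => v (i + 1)) n := by
  simp [plAux, List.range_succ_eq_map, Function.comp_def, Nat.succ_eq_add_one]

lemma plAux_add (v : ℕ → G) (n m : ℕ) :
    plAux v (n + m) = plAux v n * plAux (fun i => v (n + i)) m := by
  simp [plAux, List.range_add, Function.comp_def]

lemma plAux_tail (v : ℕ → G) {n m : ℕ} (h : n ≤ m) (hv : ∀ i ≥ n, v i = 1) :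
    plAux v m = plAux v n := by
  rw [show m = n + (m - n) by omega, plAux_add]
  have h1 : plAux (fun i => v (n + i)) (m - n) = 1 := by
    apply List.prod_eq_one
    intro x hx
    simp only [List.mem_map, List.mem_range] at hx
    obtain ⟨i, -, rfl⟩ := hx
    exact hv _ (Nat.le_add_right n i)
  rw [h1, mul_one]

variable [TopologicalSpace G] [IsTopologicalGroup G]

/-- Key lemma on finite products: open sets around each factor plus a slack set. -/
lemma key_prod (N : ℕ) (v : ℕ → G) (c : G) (W : Set G) (hW : IsOpen W)
    (hmem : plAux v N * c ∈ W) :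
    ∃ (U : ℕ → Set G) (V : Set G), (∀ i < N, IsOpen (U i) ∧ v i ∈ U i) ∧
      IsOpen V ∧ c ∈ V ∧
      ∀ u : ℕ → G, ∀ t ∈ V, (∀ i < N, u i ∈ U i) → plAux u N * t ∈ W := by
  induction N generalizing c with
  | zero =>
    refine ⟨fun _ => Set.univ, W, by simp, hW, by simpa [plAux] using hmem, ?_⟩
    intro u t ht _
    simpa [plAux] using ht
  | succ n ih =>
    have h1 : plAux v n * (v n * c) ∈ W := by
      rw [← mul_assoc, ← plAux_succ]; exact hmem
    obtain ⟨U, V', hU, hV', hcV', hprop⟩ := ih (v n * c) h1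
    have hmulopen : IsOpen ((fun p : G × G => p.1 * p.2) ⁻¹' V') :=
      hV'.preimage continuous_mul
    obtain ⟨P, Q, hP, hQ, hvP, hcQ, hPQ⟩ :=
      isOpen_prod_iff.mp hmulopen (v n) c hcV'
    refine ⟨Function.update U n P, Q, ?_, hQ, hcQ, ?_⟩
    · intro i hi
      by_cases h : i = n
      · subst h; simp [Function.update_self, hP, hvP]
      · rw [Function.update_of_ne h]
        exact hU i (by omega)
    · intro u t ht hu
      rw [plAux_succ, mul_assoc]
      apply hprop
      · exact hPQ (Set.mk_mem_prod (by simpa [Function.update_self] using hu n (by omega)) ht)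
      · intro i hi
        have := hu i (by omega)
        rwa [Function.update_of_ne (by omega)] at this
      
/-- A chain of open neighborhoods of 1 with `C (k+1) * C (k+1) ⊆ C k`. -/
lemma key_chain (V : Set G) (hV : IsOpen V) (h1 : (1 : G) ∈ V) :
    ∃ C : ℕ → Set G, C 0 = V ∧ ∀ k, IsOpen (C k) ∧ (1 : G) ∈ C k ∧
      ∀ a ∈ C (k + 1), ∀ b ∈ C (k + 1), a * b ∈ C k := by
  have step : ∀ S : {S : Set G // IsOpen S ∧ (1 : G) ∈ S},
      ∃ T : Set G, IsOpen T ∧ (1 : G) ∈ T ∧ T * T ⊆ S.1 := fun S =>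
    exists_open_nhds_one_mul_subset (S.2.1.mem_nhds S.2.2)
  let f : {S : Set G // IsOpen S ∧ (1 : G) ∈ S} → {S : Set G // IsOpen S ∧ (1 : G) ∈ S} :=
    fun S => ⟨(step S).choose, (step S).choose_spec.1, (step S).choose_spec.2.1⟩
  have hf : ∀ S, (f S).1 * (f S).1 ⊆ S.1 := fun S => (step S).choose_spec.2.2
  refine ⟨fun k => (f^[k] ⟨V, hV, h1⟩).1, by simp, fun k => ?_⟩
  refine ⟨(f^[k] ⟨V, hV, h1⟩).2.1, (f^[k] ⟨V, hV, h1⟩).2.2, ?_⟩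
  intro a ha b hb
  have hit : f^[k + 1] (⟨V, hV, h1⟩ : {S : Set G // IsOpen S ∧ (1 : G) ∈ S})
      = f (f^[k] ⟨V, hV, h1⟩) := Function.iterate_succ_apply' f k _
  have ha' : a ∈ (f (f^[k] ⟨V, hV, h1⟩)).1 := by rw [← hit]; exact ha
  have hb' : b ∈ (f (f^[k] ⟨V, hV, h1⟩)).1 := by rw [← hit]; exact hb
  exact hf _ (Set.mul_mem_mul ha' hb')

/-- Tail products stay in the first set of the chain. -/
lemma key_tail (C : ℕ → Set G)
    (hC : ∀ k, IsOpen (C k) ∧ (1 : G) ∈ C k ∧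
      ∀ a ∈ C (k + 1), ∀ b ∈ C (k + 1), a * b ∈ C k) :
    ∀ n (u : ℕ → G) (k), (∀ i < n, u i ∈ C (k + i + 1)) → plAux u n ∈ C k := by
  intro n
  induction n with
  | zero => intro u k _; simpa [plAux] using (hC k).2.1
  | succ m ih =>
    intro u k hu
    rw [plAux_shift]
    apply (hC k).2.2
    · simpa using hu 0 (by omega)
    · apply ih
      intro i hi
      have := hu (i + 1) (by omega)
      rwa [show k + (i + 1) + 1 = k + 1 + i + 1 by omega] at this

end Aux

/-- for a tower (Gᵢ) of closed subgroups of a topological group G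
with union G, the multiplication map `p : ⊡ᵢ Gᵢ → G` is continuous for the
small box topology. -/
theorem stmt6 {G : Type*} [Group G] [TopologicalSpace G] [IsTopologicalGroup G]
    (H : ℕ → Subgroup G) (hcl : ∀ i, IsClosed (H i : Set G)) (hmono : Monotone H)
    (hunion : ∀ g : G, ∃ i, g ∈ H i) :
    @Continuous (SmallBox H) G (smallBoxTop H) _ (boxMulMap H) := by
  classical
  letI : TopologicalSpace (SmallBox H) := smallBoxTop H
  rw [continuous_def]
  intro W hW
  rw [isOpen_iff_forall_mem_open]
  intro x hx
  -- data for the point x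
  set N := x.2.choose with hNdef
  have hxN : ∀ i ≥ N, x.1 i = 1 := x.2.choose_spec
  set vx : ℕ → G := fun i => (x.1 i : G) with hvx
  have hpx : boxMulMap H x = plAux vx N := rfl
  have hmem : plAux vx N * 1 ∈ W := by
    rw [mul_one, ← hpx]; exact hx
  obtain ⟨U, V, hU, hVopen, hV1, hprop⟩ := key_prod N vx 1 W hW hmem
  obtain ⟨C, hC0, hC⟩ := key_chain V hVopen hV1
  -- the box
  set B : ∀ i, Set (H i) := fun i =>
    if h : i < N then (fun g : H i => (g : G)) ⁻¹' U i
    else (fun g : H i => (g : G)) ⁻¹' C (i - N + 1) with hB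
  have hBopen : ∀ i, IsOpen (B i) := by
    intro i
    by_cases h : i < N
    · simp only [hB, dif_pos h]
      exact (hU i h).1.preimage continuous_subtype_val
    · simp only [hB, dif_neg h]
      exact (hC (i - N + 1)).1.preimage continuous_subtype_val
  refine ⟨Subtype.val ⁻¹' Set.pi Set.univ B, ?_, ?_, ?_⟩
  · -- subset of the preimage of W
    intro y hy
    simp only [Set.mem_preimage, Set.mem_pi, Set.mem_univ, forall_true_left] at hy
    set Ny := y.2.choose with hNydef
    have hyN : ∀ i ≥ Ny, y.1 i = 1 := y.2.choose_spec
    set vy : ℕ → G := fun i => (y.1 i : G) with hvy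
    have hvy1 : ∀ i ≥ Ny, vy i = 1 := by
      intro i hi; simp [hvy, hyN i hi]
    set M := max N Ny with hM
    have hpy : boxMulMap H y = plAux vy M := by
      have h1 : boxMulMap H y = plAux vy Ny := rfl
      rw [h1, plAux_tail vy (le_max_right N Ny) hvy1]
    rw [Set.mem_preimage, hpy, show M = N + (M - N) by omega, plAux_add]
    apply hprop
    · -- the tail product is in C 0 = V
      rw [← hC0]
      have := key_tail C hC (M - N) (fun i => vy (N + i)) 0 ?_
      · simpa using this
      · intro i hi
        have hBi := hy (N + i)
        have hni : ¬ (N + i < N) := by omega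
        simp only [hB, dif_neg hni, Set.mem_preimage] at hBi
        rwa [show N + i - N + 1 = 0 + i + 1 by omega] at hBi
    · intro i hi
      have hBi := hy i
      simp only [hB, dif_pos hi, Set.mem_preimage] at hBi
      exact hBi
  · -- openness in the small box topology
    refine ⟨Set.pi Set.univ B, ?_, rfl⟩
    exact TopologicalSpace.GenerateOpen.basic _ ⟨B, hBopen, rfl⟩
  · -- membership of x
    simp only [Set.mem_preimage, Set.mem_pi, Set.mem_univ, forall_true_left]
    intro i
    by_cases h : i < N
    · simp only [hB, dif_pos h, Set.mem_preimage]
      exact (hU i h).2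
    · simp only [hB, dif_neg h, Set.mem_preimage]
      have : x.1 i = 1 := hxN i (by omega)
      rw [this]
      simpa using (hC (i - N + 1)).2.1
end

section
/- Let (Gᵢ) be a tower of closed subgroups of a topological group G with union G, and p : ⊡ᵢ Gᵢ → G the multiplication map. If p admits a local section at e (i.e., there is a neighborhood V of e in G and a continuous map s : V → ⊡ᵢ Gᵢ with p∘s = id_V), then p is an open map. -/
open Topology

section Aux
variable {G : Type*} [Group G] [TopologicalSpace G] {H : ℕ → Subgroup G}

/-- The product of the first `K` coordinates. -/
def pUpTo (x : SmallBox H) (K : ℕ) : G :=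
  ((List.range K).map fun i => ((x.1 i : G))).prod

lemma pUpTo_succ (x : SmallBox H) (K : ℕ) :
    pUpTo x (K + 1) = pUpTo x K * (x.1 K : G) := by
  unfold pUpTo
  rw [List.range_succ, List.map_append, List.prod_append]
  simp

lemma pUpTo_stable (x : SmallBox H) {K L : ℕ} (hKL : K ≤ L)
    (h : ∀ i, K ≤ i → x.1 i = 1) : pUpTo x L = pUpTo x K := by
  obtain ⟨d, rfl⟩ := Nat.exists_eq_add_of_le hKL
  unfold pUpTo
  rw [List.range_add, List.map_append, List.map_map, List.prod_append]
  have h2 : ((List.range d).map ((fun i => ((x.1 i : G))) ∘ (K + ·))).prod = 1 := by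
    apply List.prod_eq_one
    intro g hg
    simp only [List.mem_map, List.mem_range, Function.comp_apply] at hg
    obtain ⟨i, _, rfl⟩ := hg
    rw [h (K + i) (Nat.le_add_right _ _)]
    simp
  rw [h2, mul_one]

lemma boxMulMap_eq' (x : SmallBox H) {K : ℕ} (h : ∀ i, K ≤ i → x.1 i = 1) :
    boxMulMap H x = pUpTo x K := by
  have h1 : boxMulMap H x = pUpTo x x.2.choose := rfl
  have hN : ∀ i, x.2.choose ≤ i → x.1 i = 1 := fun i hi => x.2.choose_spec i hi
  rw [h1]
  rcases le_total K x.2.choose with h' | h'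
  · exact pUpTo_stable x h' h
  · exact (pUpTo_stable x h' hN).symm

lemma isOpen_box (U : ∀ i, Set (H i)) (hU : ∀ i, IsOpen (U i)) :
    IsOpen[smallBoxTop H] {z : SmallBox H | ∀ i, z.1 i ∈ U i} := by
  have h1 : IsOpen[boxTopology fun i => (H i : Type _)] (Set.pi Set.univ U) :=
    TopologicalSpace.GenerateOpen.basic _ ⟨U, hU, rfl⟩
  have h2 : {z : SmallBox H | ∀ i, z.1 i ∈ U i}
      = (Subtype.val : SmallBox H → ∀ i, H i) ⁻¹' (Set.pi Set.univ U) := by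
    ext z; simp [Set.mem_pi]
  rw [h2, smallBoxTop]
  exact @isOpen_induced (SmallBox H) (∀ i, H i) (boxTopology fun i => (H i : Type _)) Subtype.val _ h1

lemma continuous_into_smallBox {α : Type*} {tα : TopologicalSpace α} {f : α → SmallBox H}
    (h : ∀ U : ∀ i, Set (H i), (∀ i, IsOpen (U i)) → IsOpen {a | ∀ i, (f a).1 i ∈ U i}) :
    Continuous[tα, smallBoxTop H] f := by
  rw [smallBoxTop, continuous_induced_rng]
  apply continuous_generateFrom_iff.mpr
  rintro S ⟨U, hU, rfl⟩
  have h2 : (Subtype.val ∘ f) ⁻¹' (Set.pi Set.univ U) = {a | ∀ i, (f a).1 i ∈ U i} := by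
    ext a; simp [Set.mem_pi]
  rw [h2]
  exact h U hU

end Aux
section Aux2
variable {G : Type*} [Group G] [TopologicalSpace G] {H : ℕ → Subgroup G}


lemma coe_congr (z : SmallBox H) {a b : ℕ} (h : a = b) :
    ((z.1 a : G)) = ((z.1 b : G)) := by subst h; rfl

/-- Concatenation: put `x` (supported below `N`) on the first `N` coordinates and
`z` shifted by `N` afterwards. -/
def shiftConcat (hmono : Monotone H) (x : SmallBox H) (N : ℕ) (z : SmallBox H) :
    SmallBox H :=
  ⟨fun i => if h : i < N then x.1 i
    else ⟨(z.1 (i - N) : G), hmono (Nat.sub_le i N) (z.1 (i - N)).2⟩, by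
    obtain ⟨K, hK⟩ := z.2
    refine ⟨N + K, fun i hi => ?_⟩
    dsimp only
    rw [dif_neg (by omega)]
    have h1 : z.1 (i - N) = 1 := hK _ (by omega)
    apply Subtype.ext
    simp [h1]⟩

lemma shiftConcat_boxOne (hmono : Monotone H) (x : SmallBox H) (N : ℕ)
    (hx : ∀ i, N ≤ i → x.1 i = 1) : shiftConcat hmono x N (boxOne H) = x := by
  apply Subtype.ext; funext i
  simp only [shiftConcat]
  split
  · rfl
  · rename_i h
    rw [hx i (by omega)]
    apply Subtype.ext
    simp [boxOne]

lemma boxMulMap_shiftConcat (hmono : Monotone H) (x : SmallBox H) (N : ℕ)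
    (hx : ∀ i, N ≤ i → x.1 i = 1) (z : SmallBox H) :
    boxMulMap H (shiftConcat hmono x N z) = boxMulMap H x * boxMulMap H z := by
  set K := z.2.choose with hKdef
  have hK : ∀ i, K ≤ i → z.1 i = 1 := fun i hi => z.2.choose_spec i hi
  have hbound : ∀ i, N + K ≤ i → (shiftConcat hmono x N z).1 i = 1 := by
    intro i hi
    show (if h : i < N then x.1 i else _) = 1
    rw [dif_neg (by omega)]
    have h1 : z.1 (i - N) = 1 := hK _ (by omega)
    apply Subtype.ext
    simp [h1]
  rw [boxMulMap_eq' _ hbound, boxMulMap_eq' x hx, boxMulMap_eq' z hK]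
  unfold pUpTo
  rw [List.range_add, List.map_append, List.map_map, List.prod_append]
  congr 1
  · apply congrArg List.prod
    apply List.map_congr_left
    intro i hi
    rw [List.mem_range] at hi
    show (((shiftConcat hmono x N z).1 i : G)) = ((x.1 i : G))
    simp only [shiftConcat]
    rw [dif_pos hi]
  · apply congrArg List.prod
    apply List.map_congr_left
    intro j _
    show (((shiftConcat hmono x N z).1 (N + j) : G)) = ((z.1 j : G))
    simp only [shiftConcat]
    rw [dif_neg (by omega)]
    exact coe_congr z (by omega)

lemma continuous_shiftConcat (hmono : Monotone H) (x : SmallBox H) (N : ℕ) :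
    Continuous[smallBoxTop H, smallBoxTop H] (shiftConcat hmono x N) := by
  apply continuous_into_smallBox
  intro U hU
  by_cases hx : ∀ i, i < N → x.1 i ∈ U i
  · have heq : {z : SmallBox H | ∀ i, (shiftConcat hmono x N z).1 i ∈ U i}
        = {z : SmallBox H | ∀ j, z.1 j ∈
            ((fun y : H j => (⟨(y : G), hmono (Nat.le_add_left j N) y.2⟩ : H (N + j)))
              ⁻¹' U (N + j))} := by
      ext z
      simp only [Set.mem_setOf_eq, Set.mem_preimage]
      constructor
      · intro h j
        have := h (N + j)
        simp only [shiftConcat] at this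
        rw [dif_neg (by omega)] at this
        convert this using 2
        exact coe_congr z (by omega)
      · intro h i
        simp only [shiftConcat]
        split
        · exact hx i (by omega)
        · rename_i hi
          obtain ⟨j, rfl⟩ : ∃ j, i = N + j := ⟨i - N, by omega⟩
          have := h j
          convert this using 2
          exact coe_congr z (by omega)
    rw [heq]
    apply isOpen_box
    intro j
    exact (hU (N + j)).preimage (by continuity)
  · have heq : {z : SmallBox H | ∀ i, (shiftConcat hmono x N z).1 i ∈ U i} = ∅ := by
      ext z
      simp only [Set.mem_setOf_eq, Set.mem_empty_iff_false, iff_false]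
      push_neg at hx
      obtain ⟨i, hi, hxi⟩ := hx
      intro h
      apply hxi
      have := h i
      simp only [shiftConcat] at this
      rwa [dif_pos hi] at this
    rw [heq]
    exact @isOpen_empty (SmallBox H) (smallBoxTop H)

/-- Apply a continuous map on each coordinate (identity for large indices). -/
def coordMap (c : ∀ k, H k → H k) (M : ℕ) (hid : ∀ k, M ≤ k → ∀ y, c k y = y)
    (z : SmallBox H) : SmallBox H :=
  ⟨fun k => c k (z.1 k), by
    obtain ⟨K, hK⟩ := z.2
    exact ⟨max M K, fun i hi => by
      dsimp only
      rw [hid i (le_trans (le_max_left _ _) hi), hK i (le_trans (le_max_right _ _) hi)]⟩⟩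

lemma continuous_coordMap (c : ∀ k, H k → H k) (M : ℕ)
    (hid : ∀ k, M ≤ k → ∀ y, c k y = y) (hc : ∀ k, Continuous (c k)) :
    Continuous[smallBoxTop H, smallBoxTop H] (coordMap c M hid) := by
  apply continuous_into_smallBox
  intro U hU
  have heq : {z : SmallBox H | ∀ i, (coordMap c M hid z).1 i ∈ U i}
      = {z : SmallBox H | ∀ i, z.1 i ∈ (c i ⁻¹' U i)} := rfl
  rw [heq]
  exact isOpen_box _ fun i => (hU i).preimage (hc i)

end Aux2

/-- if the multiplication map `p : ⊡ᵢ Gᵢ → G` admits a continuous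
local section at the identity, then `p` is an open map. -/
theorem stmt8 {G : Type*} [Group G] [TopologicalSpace G] [IsTopologicalGroup G]
    (H : ℕ → Subgroup G) (hcl : ∀ i, IsClosed (H i : Set G)) (hmono : Monotone H)
    (hunion : ∀ g : G, ∃ i, g ∈ H i)
    (V : Set G) (hV : V ∈ nhds (1 : G)) (s : V → SmallBox H)
    (hs : @Continuous V (SmallBox H) _ (smallBoxTop H) s)
    (hps : ∀ v : V, boxMulMap H (s v) = (v : G)) :
    @IsOpenMap (SmallBox H) G (smallBoxTop H) _ (boxMulMap H) := by
  intro U hU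
  rw [isOpen_iff_mem_nhds]
  rintro g ⟨x, hxU, rfl⟩
  have h1V : (1 : G) ∈ V := mem_of_mem_nhds hV
  set t : SmallBox H := s ⟨1, h1V⟩ with htdef
  have ht1 : boxMulMap H t = 1 := hps ⟨1, h1V⟩
  set M := t.2.choose with hMdef
  have hM : ∀ i, M ≤ i → t.1 i = 1 := fun i hi => t.2.choose_spec i hi
  set T : ℕ → G := fun k => pUpTo t k with hTdef
  have hTsucc : ∀ k, T (k + 1) = T k * (t.1 k : G) := fun k => pUpTo_succ t k
  have hTmem : ∀ k, T k ∈ H k := by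
    intro k
    induction k with
    | zero => exact one_mem _
    | succ n ih =>
      rw [hTsucc n]
      exact mul_mem (hmono (Nat.le_succ n) ih) (hmono (Nat.le_succ n) (t.1 n).2)
  have hT1 : ∀ k, M ≤ k → T k = 1 := by
    intro k hk
    have h2 : T k = pUpTo t M := pUpTo_stable t hk hM
    rw [h2, ← boxMulMap_eq' t hM, ht1]
  set c : ∀ k, H k → H k := fun k y =>
    ⟨T k * (y : G) * ((t.1 k : G))⁻¹ * (T k)⁻¹,
      mul_mem (mul_mem (mul_mem (hTmem k) y.2) (inv_mem (t.1 k).2))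
        (inv_mem (hTmem k))⟩ with hcdef
  have hcid : ∀ k, M ≤ k → ∀ y, c k y = y := by
    intro k hk y
    apply Subtype.ext
    show T k * (y : G) * ((t.1 k : G))⁻¹ * (T k)⁻¹ = (y : G)
    rw [hT1 k hk, hM k hk]
    simp
  have hccont : ∀ k, Continuous (c k) := by
    intro k
    apply Continuous.subtype_mk
    fun_prop
  have htel : ∀ (z : SmallBox H) (K : ℕ),
      pUpTo (coordMap c M hcid z) K = pUpTo z K * (T K)⁻¹ := by
    intro z K
    induction K with
    | zero => simp [pUpTo, hTdef]
    | succ n ih =>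
      rw [pUpTo_succ, pUpTo_succ, ih, hTsucc]
      show pUpTo z n * (T n)⁻¹ * (T n * (z.1 n : G) * ((t.1 n : G))⁻¹ * (T n)⁻¹)
        = pUpTo z n * (z.1 n : G) * (T n * (t.1 n : G))⁻¹
      group
  have hκp : ∀ v : V, boxMulMap H (coordMap c M hcid (s v)) = (v : G) := by
    intro v
    set K := max M ((s v).2.choose) with hKdef
    have hb : ∀ i, K ≤ i → (s v).1 i = 1 := fun i hi =>
      (s v).2.choose_spec i (le_trans (le_max_right _ _) hi)
    have hb2 : ∀ i, K ≤ i → (coordMap c M hcid (s v)).1 i = 1 := by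
      intro i hi
      show c i ((s v).1 i) = 1
      rw [hcid i (le_trans (le_max_left _ _) hi), hb i hi]
    rw [boxMulMap_eq' _ hb2, htel, ← boxMulMap_eq' _ hb, hps v,
      hT1 K (le_max_left _ _)]
    simp
  have hκ1 : coordMap c M hcid t = boxOne H := by
    apply Subtype.ext
    funext k
    show c k (t.1 k) = 1
    apply Subtype.ext
    show T k * (t.1 k : G) * ((t.1 k : G))⁻¹ * (T k)⁻¹ = ((1 : H k) : G)
    rw [OneMemClass.coe_one]
    group
  set N := x.2.choose with hNdef
  have hN : ∀ i, N ≤ i → x.1 i = 1 := fun i hi => x.2.choose_spec i hi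
  have hφcont := continuous_shiftConcat hmono x N
  have hWopen : IsOpen[smallBoxTop H] (shiftConcat hmono x N ⁻¹' U) :=
    @Continuous.isOpen_preimage _ _ (smallBoxTop H) (smallBoxTop H) _ hφcont U hU
  have hWone : boxOne H ∈ shiftConcat hmono x N ⁻¹' U := by
    show shiftConcat hmono x N (boxOne H) ∈ U
    rw [shiftConcat_boxOne hmono x N hN]
    exact hxU
  have hκcont : Continuous[_, smallBoxTop H] fun v : V => coordMap c M hcid (s v) :=
    @Continuous.comp _ _ _ _ (smallBoxTop H) (smallBoxTop H) _ _
      (continuous_coordMap c M hcid hccont) hs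
  have hSopen : IsOpen {v : V | coordMap c M hcid (s v) ∈ shiftConcat hmono x N ⁻¹' U} :=
    @Continuous.isOpen_preimage _ _ _ (smallBoxTop H) _ hκcont _ hWopen
  have hSmem : (⟨1, h1V⟩ : V) ∈
      {v : V | coordMap c M hcid (s v) ∈ shiftConcat hmono x N ⁻¹' U} := by
    simp only [Set.mem_setOf_eq]
    rw [← htdef, hκ1]
    exact hWone
  have hSnhds := hSopen.mem_nhds hSmem
  rw [nhds_subtype_eq_comap] at hSnhds
  obtain ⟨O, hO1, hOsub⟩ := Filter.mem_comap.mp hSnhds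
  have hOV : O ∩ V ∈ nhds (1 : G) := Filter.inter_mem hO1 hV
  have h2 : (fun o => boxMulMap H x * o) '' (O ∩ V) ∈ nhds (boxMulMap H x) := by
    have h3 := Filter.image_mem_map (m := fun o => boxMulMap H x * o) hOV
    rwa [map_mul_left_nhds_one] at h3
  refine Filter.mem_of_superset h2 ?_
  rintro _ ⟨o, ⟨hoO, hoV⟩, rfl⟩
  refine ⟨shiftConcat hmono x N (coordMap c M hcid (s ⟨o, hoV⟩)), ?_, ?_⟩
  · exact hOsub (show (⟨o, hoV⟩ : V).1 ∈ O from hoO)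
  · rw [boxMulMap_shiftConcat hmono x N hN, hκp ⟨o, hoV⟩]
end

section
/- Let (Gᵢ) be a tower of closed subgroups of a topological group G with union G. If the multiplication map p : ⊡ᵢ Gᵢ → G is open, then G is the direct limit of the tower (Gᵢ) in the category of topological groups; that is, any group homomorphism h : G → H into a topological group H is continuous whenever each restriction h|Gᵢ is continuous. -/
lemma exists_nhds_seq {K : Type*} [Group K] [TopologicalSpace K] [IsTopologicalGroup K]
    {V : Set K} (hV : V ∈ nhds 1) :
    ∃ W : ℕ → Set K, W 0 ⊆ V ∧ (∀ n, W n ∈ nhds 1) ∧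
      ∀ n, ∀ a ∈ W (n+1), ∀ b ∈ W (n+1), a * b ∈ W n := by
  classical
  let g : {S : Set K // S ∈ nhds 1} → {S : Set K // S ∈ nhds 1} := fun S =>
    ⟨(exists_nhds_one_split S.2).choose, (exists_nhds_one_split S.2).choose_spec.1⟩
  have hg : ∀ S, ∀ a ∈ (g S).1, ∀ b ∈ (g S).1, a * b ∈ S.1 := fun S =>
    (exists_nhds_one_split S.2).choose_spec.2
  refine ⟨fun n => (g^[n+1] ⟨V, hV⟩).1, ?_, fun n => (g^[n+1] ⟨V, hV⟩).2, fun n => ?_⟩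
  · intro a ha
    have := hg ⟨V, hV⟩ a ha 1 (mem_of_mem_nhds (g ⟨V, hV⟩).2)
    simpa using this
  · intro a ha b hb
    have h2 : g^[n+1+1] ⟨V, hV⟩ = g (g^[n+1] ⟨V, hV⟩) := Function.iterate_succ_apply' g (n+1) _
    exact hg _ a (by simpa only [h2] using ha) b (by simpa only [h2] using hb)

lemma prod_mem_W {K : Type*} [Monoid K] (W : ℕ → Set K) (h1 : ∀ n, (1:K) ∈ W n)
    (hsplit : ∀ n, ∀ a ∈ W (n+1), ∀ b ∈ W (n+1), a * b ∈ W n) :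
    ∀ N (k : ℕ) (f : ℕ → K), (∀ j < N, f j ∈ W (k+j+1)) →
      ((List.range N).map f).prod ∈ W k := by
  intro N
  induction N with
  | zero => intro k f _; simpa using h1 k
  | succ N ih =>
    intro k f hf
    rw [List.range_succ_eq_map, List.map_cons, List.prod_cons, List.map_map]
    refine hsplit k _ (by simpa using hf 0 (Nat.succ_pos N)) _ ?_
    refine ih (k+1) (f ∘ Nat.succ) (fun j hj => ?_)
    have := hf (j+1) (by omega)
    simpa [Function.comp, show k+1+j+1 = k+(j+1)+1 by ring] using this


/-- if the multiplication map `p : ⊡ᵢ Gᵢ → G` is open, then `G`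
is the direct limit of the tower `(Gᵢ)` in the category of topological groups:
every group homomorphism `h : G → K` to a topological group whose restriction
to each `Gᵢ` is continuous is itself continuous. -/
theorem stmt9 {G : Type*} [Group G] [TopologicalSpace G] [IsTopologicalGroup G]
    (H : ℕ → Subgroup G) (hcl : ∀ i, IsClosed (H i : Set G)) (hmono : Monotone H)
    (hunion : ∀ g : G, ∃ i, g ∈ H i)
    (hopen : @IsOpenMap (SmallBox H) G (smallBoxTop H) _ (boxMulMap H))
    {K : Type*} [Group K] [TopologicalSpace K] [IsTopologicalGroup K]
    (h : G →* K) (hres : ∀ i, Continuous fun x : H i => h (x : G)) :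
    Continuous h := by
  apply continuous_of_continuousAt_one h
  intro V hV
  rw [map_one] at hV
  obtain ⟨W, hW0, hWn, hWs⟩ := exists_nhds_seq hV
  set U : ∀ i, Set (H i) := fun i => (fun x : H i => h (x : G)) ⁻¹' interior (W (i+1)) with hU
  have hUopen : ∀ i, IsOpen (U i) := fun i => (hres i).isOpen_preimage _ isOpen_interior
  have hUone : ∀ i, (1 : H i) ∈ U i := fun i => by
    show h ((1 : H i) : G) ∈ interior (W (i+1))
    rw [OneMemClass.coe_one, map_one]
    exact mem_interior_iff_mem_nhds.mpr (hWn (i+1))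
  set B : Set (SmallBox H) := Subtype.val ⁻¹' Set.pi Set.univ U with hB
  have hBopen : @IsOpen _ (smallBoxTop H) B := by
    rw [smallBoxTop]
    exact (@isOpen_induced_iff _ _ (boxTopology fun i => H i) _ _).mpr
      ⟨_, TopologicalSpace.isOpen_generateFrom_of_mem ⟨U, hUopen, rfl⟩, rfl⟩
  have hone : (1 : G) ∈ boxMulMap H '' B := by
    refine ⟨boxOne H, fun i _ => hUone i, ?_⟩
    apply List.prod_eq_one
    intro x hx
    simp only [List.mem_map] at hx
    obtain ⟨i, _, rfl⟩ := hx
    simp [boxOne]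
  have hsub : boxMulMap H '' B ⊆ h ⁻¹' V := by
    rintro _ ⟨x, hx, rfl⟩
    have h1W : ∀ n, (1:K) ∈ W n := fun n => mem_of_mem_nhds (hWn n)
    show h (boxMulMap H x) ∈ V
    apply hW0
    rw [boxMulMap, map_list_prod, List.map_map]
    refine prod_mem_W W h1W hWs _ 0 _ (fun j hj => ?_)
    have : x.1 j ∈ U j := hx j (Set.mem_univ j)
    simpa [Function.comp] using interior_subset this
  rw [Filter.mem_map]
  exact Filter.mem_of_superset ((hopen B hBopen).mem_nhds hone) hsub
end

section
/- The small box product ⊡ᵢ (Xᵢ, xᵢ) of a sequence of pointed spaces is strongly contractible at its base point x = (xᵢ)ᵢ if and only if each Xᵢ is strongly contractible at xᵢ. -/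
/-- The small box product of a sequence of pointed spaces: sequences eventually
equal to the base point. -/
abbrev SmallBoxP (X : ℕ → Type*) (pt : ∀ i, X i) :=
  {x : ∀ i, X i // ∃ N, ∀ i ≥ N, x i = pt i}

/-- The topology of the small box product: subspace of the box topology. -/
def smallBoxPTop (X : ℕ → Type*) [∀ i, TopologicalSpace (X i)] (pt : ∀ i, X i) :
    TopologicalSpace (SmallBoxP X pt) :=
  TopologicalSpace.induced Subtype.val (boxTopology X)

/-- A space `X` is strongly contractible at `x` if `X` contracts to `x` in
itself keeping `x` fixed throughout the homotopy. -/
def StronglyContractibleAt {X : Type*} [TopologicalSpace X] (x : X) : Prop :=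
  ∃ H : X × unitInterval → X, Continuous H ∧ (∀ y, H (y, 0) = y) ∧
    (∀ y, H (y, 1) = x) ∧ ∀ t, H (x, t) = x

/-- the small box product `⊡ᵢ (Xᵢ, xᵢ)` is strongly contractible
at its base point iff each `Xᵢ` is strongly contractible at `xᵢ`. -/
theorem stmt11 (X : ℕ → Type*) [∀ i, TopologicalSpace (X i)] (pt : ∀ i, X i) :
    @StronglyContractibleAt (SmallBoxP X pt) (smallBoxPTop X pt)
        ⟨pt, 0, fun _ _ => rfl⟩ ↔
      ∀ i, StronglyContractibleAt (pt i) := by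
  letI : TopologicalSpace (SmallBoxP X pt) := smallBoxPTop X pt
  have hval : @Continuous (SmallBoxP X pt) (∀ i, X i) _ (boxTopology X) Subtype.val :=
    continuous_induced_dom
  -- evaluation is continuous from the box topology
  have hev : ∀ i, @Continuous (∀ j, X j) (X i) (boxTopology X) _ (fun f => f i) := by
    intro i
    rw [continuous_def]
    intro V hV
    have : (fun f : ∀ j, X j => f i) ⁻¹' V =
        Set.pi Set.univ (Function.update (fun j => (Set.univ : Set (X j))) i V) := by
      ext f
      simp only [Set.mem_preimage, Set.mem_univ_pi]
      constructor
      · intro hf j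
        rcases eq_or_ne j i with rfl | hj
        · simpa using hf
        · simp [Function.update_of_ne hj]
      · intro hf
        have := hf i
        simpa using this
    rw [this]
    refine TopologicalSpace.GenerateOpen.basic _ ⟨_, fun j => ?_, rfl⟩
    rcases eq_or_ne j i with rfl | hj
    · simpa using hV
    · simp [Function.update_of_ne hj]
  have hπ : ∀ i, Continuous (fun y : SmallBoxP X pt => y.1 i) := fun i =>
    @Continuous.comp _ _ _ _ (boxTopology X) _ _ _ (hev i) hval
  constructor
  · rintro ⟨H, hc, h0, h1, hx⟩ i
    -- the inclusion of X i
    have hupd : ∀ z : X i, ∃ N, ∀ j ≥ N, Function.update pt i z j = pt j := by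
      intro z
      exact ⟨i + 1, fun j hj => Function.update_of_ne (by omega) _ _⟩
    set ι : X i → SmallBoxP X pt := fun z => ⟨Function.update pt i z, hupd z⟩ with hιdef
    have hι : Continuous ι := by
      apply continuous_induced_rng.2
      show @Continuous _ _ _ (boxTopology X) _
      rw [boxTopology, continuous_generateFrom_iff]
      rintro s ⟨U, hU, rfl⟩
      by_cases h : ∀ j, j ≠ i → pt j ∈ U j
      · have : Subtype.val ∘ ι ⁻¹' Set.pi Set.univ U = U i := by
          ext z
          simp only [Set.mem_preimage, Set.mem_univ_pi, hιdef, Function.comp]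
          constructor
          · intro hz
            have := hz i
            simpa using this
          · intro hz j
            rcases eq_or_ne j i with rfl | hj
            · simpa using hz
            · simpa [Function.update_of_ne hj] using h j hj
        rw [this]; exact hU i
      · push_neg at h
        obtain ⟨j, hj, hjU⟩ := h
        have : Subtype.val ∘ ι ⁻¹' Set.pi Set.univ U = ∅ := by
          ext z
          simp only [Set.mem_preimage, Set.mem_univ_pi, Set.mem_empty_iff_false, iff_false,
            Function.comp]
          intro hz
          exact hjU (by simpa [hιdef, Function.update_of_ne hj] using hz j)
        rw [this]; exact isOpen_empty
    have hιpt : ι (pt i) = ⟨pt, 0, fun _ _ => rfl⟩ := by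
      apply Subtype.ext
      simp [hιdef]
    refine ⟨fun p => (H (ι p.1, p.2)).1 i, ?_, ?_, ?_, ?_⟩
    · exact (hπ i).comp (hc.comp ((hι.comp continuous_fst).prodMk continuous_snd))
    · intro z
      show (H (ι z, 0)).1 i = z
      rw [h0]; simp [hιdef]
    · intro z
      show (H (ι z, 1)).1 i = pt i
      rw [h1]
    · intro t
      show (H (ι (pt i), t)).1 i = pt i
      rw [hιpt, hx]
  · intro h
    choose H hHc hH0 hH1 hHx using h
    refine ⟨fun p => ⟨fun i => H i (p.1.1 i, p.2), ?_⟩, ?_, ?_, ?_, ?_⟩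
    · obtain ⟨N, hN⟩ := p.1.2
      refine ⟨N, fun i hi => ?_⟩
      show H i (p.1.1 i, p.2) = pt i
      rw [hN i hi, hHx]
    · -- continuity
      apply continuous_induced_rng.2
      show @Continuous _ _ _ (boxTopology X) _
      rw [boxTopology, continuous_generateFrom_iff]
      rintro s ⟨U, hU, rfl⟩
      rw [isOpen_iff_forall_mem_open]
      rintro ⟨y, t⟩ hyt
      simp only [Set.mem_preimage, Set.mem_univ_pi, Function.comp] at hyt
      obtain ⟨N, hN⟩ := y.2
      have key : ∀ i, ∃ (W : Set (X i)) (J : Set unitInterval), IsOpen W ∧ IsOpen J ∧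
          y.1 i ∈ W ∧ t ∈ J ∧ (∀ z ∈ W, ∀ s ∈ J, H i (z, s) ∈ U i) ∧
          (N ≤ i → J = Set.univ) := by
        intro i
        by_cases hi : N ≤ i
        · have hpt : pt i ∈ U i := by
            have := hyt i
            rwa [hN i hi, hHx] at this
          have hsub : ({pt i} : Set (X i)) ×ˢ (Set.univ : Set unitInterval) ⊆
              (H i) ⁻¹' (U i) := by
            rintro ⟨z, s⟩ ⟨hz, -⟩
            simp only [Set.mem_singleton_iff] at hz
            subst hz
            simpa [hHx] using hpt
          obtain ⟨u, v, hu, hv, hiu, hiv, huv⟩ := generalized_tube_lemma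
            isCompact_singleton isCompact_univ ((hU i).preimage (hHc i)) hsub
          refine ⟨u, Set.univ, hu, isOpen_univ, ?_, trivial, ?_, fun _ => rfl⟩
          · rw [hN i hi]; exact hiu rfl
          · intro z hz s _
            exact huv ⟨hz, hiv trivial⟩
        · have hopen := (hU i).preimage (hHc i)
          rw [isOpen_prod_iff] at hopen
          obtain ⟨u, v, hu, hv, hyu, htv, huv⟩ := hopen (y.1 i) t (hyt i)
          exact ⟨u, v, hu, hv, hyu, htv, fun z hz s hs => huv ⟨hz, hs⟩,
            fun hge => absurd hge hi⟩
      choose W J hW hJ hyW htJ hWJ hJuniv using key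
      refine ⟨(Subtype.val ⁻¹' Set.pi Set.univ W) ×ˢ (⋂ i ∈ Finset.range N, J i),
        ?_, ?_, ?_⟩
      · rintro ⟨y', t'⟩ ⟨hy', ht'⟩
        simp only [Set.mem_preimage, Set.mem_univ_pi] at hy' ⊢
        intro i
        by_cases hi : N ≤ i
        · exact hWJ i _ (hy' i) t' (by rw [hJuniv i hi]; trivial)
        · refine hWJ i _ (hy' i) t' ?_
          simp only [Set.mem_iInter] at ht'
          exact ht' i (Finset.mem_range.2 (by omega))
      · refine IsOpen.prod ?_ ?_
        · exact @IsOpen.preimage _ _ _ (boxTopology X) Subtype.val hval _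
            (TopologicalSpace.GenerateOpen.basic _ ⟨W, hW, rfl⟩)
        · exact isOpen_biInter_finset (fun i _ => hJ i)
      · refine ⟨?_, ?_⟩
        · simp only [Set.mem_preimage, Set.mem_univ_pi]
          exact hyW
        · simp only [Set.mem_iInter]
          exact fun i _ => htJ i
    · rintro ⟨y, hy⟩
      apply Subtype.ext
      funext i
      exact hH0 i (y i)
    · intro y
      apply Subtype.ext
      funext i
      exact hH1 i (y.1 i)
    · intro t
      apply Subtype.ext
      funext i
      exact hHx i t
end

section
/- The small box product ⊡ᵢ (Xᵢ, xᵢ) is strongly locally contractible at the base point if and only if each Xᵢ is strongly locally contractible at xᵢ. -/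
/-- A space `X` is strongly locally contractible at `x` if every neighborhood
`U` of `x` contains a neighborhood `V` of `x` which contracts to `x` inside `U`
keeping `x` fixed. -/
def StronglyLocallyContractibleAt {X : Type*} [TopologicalSpace X] (x : X) : Prop :=
  ∀ U ∈ nhds x, ∃ V ∈ nhds x, V ⊆ U ∧
    ∃ H : V × unitInterval → X, Continuous H ∧
      (∀ y t, H (y, t) ∈ U) ∧ (∀ y : V, H (y, 0) = (y : X)) ∧
      (∀ y : V, H (y, 1) = x) ∧ ∀ (hx : x ∈ V) t, H (⟨x, hx⟩, t) = x

section aux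
variable (X : ℕ → Type*) [∀ i, TopologicalSpace (X i)]

lemma box_basis :
    @TopologicalSpace.IsTopologicalBasis _ (boxTopology X)
      {S | ∃ U : ∀ i, Set (X i), (∀ i, IsOpen (U i)) ∧ S = Set.pi Set.univ U} := by
  letI := boxTopology X
  refine TopologicalSpace.isTopologicalBasis_of_isOpen_of_nhds
    (fun u hu => TopologicalSpace.GenerateOpen.basic u hu) (fun a u ha hu => ?_)
  have hu' : TopologicalSpace.GenerateOpen
      {S | ∃ U : ∀ i, Set (X i), (∀ i, IsOpen (U i)) ∧ S = Set.pi Set.univ U} u := hu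
  clear hu
  revert ha
  induction hu' with
  | basic s hs => exact fun ha => ⟨s, hs, ha, subset_rfl⟩
  | univ => exact fun _ => ⟨Set.univ, ⟨fun _ => Set.univ, fun _ => isOpen_univ, by simp⟩,
      trivial, subset_rfl⟩
  | inter s t hs ht ihs iht =>
      intro ha
      obtain ⟨v₁, ⟨U₁, hU₁, rfl⟩, hav₁, hv₁⟩ := ihs ha.1
      obtain ⟨v₂, ⟨U₂, hU₂, rfl⟩, hav₂, hv₂⟩ := iht ha.2
      refine ⟨Set.pi Set.univ (fun i => U₁ i ∩ U₂ i),
        ⟨_, fun i => (hU₁ i).inter (hU₂ i), rfl⟩, fun i _ => ⟨hav₁ i trivial, hav₂ i trivial⟩,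
        fun y hy => ⟨hv₁ fun i _ => (hy i trivial).1, hv₂ fun i _ => (hy i trivial).2⟩⟩
  | sUnion S hS ih =>
      rintro ⟨s, hsS, has⟩
      obtain ⟨v, hv, hav, hvs⟩ := ih s hsS has
      exact ⟨v, hv, hav, hvs.trans (Set.subset_sUnion_of_mem hsS)⟩

lemma smallBox_mem_nhds (pt : ∀ i, X i) (b : SmallBoxP X pt) (s : Set (SmallBoxP X pt)) :
    s ∈ @nhds _ (smallBoxPTop X pt) b ↔
      ∃ U : ∀ i, Set (X i), (∀ i, IsOpen (U i)) ∧ (∀ i, b.val i ∈ U i) ∧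
        Subtype.val ⁻¹' (Set.pi Set.univ U) ⊆ s := by
  letI := boxTopology X
  letI := smallBoxPTop X pt
  rw [show (smallBoxPTop X pt) = TopologicalSpace.induced Subtype.val (boxTopology X) from rfl,
    mem_nhds_induced Subtype.val]
  constructor
  · rintro ⟨u, hu, hus⟩
    rw [(box_basis X).mem_nhds_iff] at hu
    obtain ⟨v, ⟨U, hUo, rfl⟩, hbv, hvu⟩ := hu
    exact ⟨U, hUo, fun i => hbv i trivial, fun y hy => hus (hvu hy)⟩
  · rintro ⟨U, hUo, hbU, hUs⟩
    exact ⟨_, ((box_basis X).mem_nhds_iff).2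
      ⟨_, ⟨U, hUo, rfl⟩, fun i _ => hbU i, subset_rfl⟩, hUs⟩

lemma box_proj_continuous (i : ℕ) :
    @Continuous _ _ (boxTopology X) _ (fun f : ∀ j, X j => f i) := by
  letI := boxTopology X
  rw [continuous_def]
  intro W hW
  have : (fun f : ∀ j, X j => f i) ⁻¹' W =
      Set.pi Set.univ (Function.update (fun j => (Set.univ : Set (X j))) i W) := by
    ext f
    simp only [Set.mem_preimage, Set.mem_pi, Set.mem_univ, forall_true_left]
    constructor
    · intro hf j
      rcases eq_or_ne j i with rfl | hj
      · rwa [Function.update_self]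
      · rw [Function.update_of_ne hj]; trivial
    · intro hf
      have := hf i
      rwa [Function.update_self] at this
  rw [this]
  refine TopologicalSpace.GenerateOpen.basic _ ⟨_, fun j => ?_, rfl⟩
  rcases eq_or_ne j i with rfl | hj
  · rwa [Function.update_self]
  · rw [Function.update_of_ne hj]; exact isOpen_univ

end aux

lemma stmt12_fwd (X : ℕ → Type*) [∀ i, TopologicalSpace (X i)] (pt : ∀ i, X i)
    (h : @StronglyLocallyContractibleAt (SmallBoxP X pt) (smallBoxPTop X pt)
        ⟨pt, 0, fun _ _ => rfl⟩) :
    ∀ i, StronglyLocallyContractibleAt (pt i) := by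
  letI := boxTopology X
  letI := smallBoxPTop X pt
  intro i U hU
  set b : SmallBoxP X pt := ⟨pt, 0, fun _ _ => rfl⟩ with hb
  have hupdate : ∀ (y : X i) j, j ≥ i + 1 → Function.update pt i y j = pt j := by
    intro y j hj
    exact Function.update_of_ne (by omega) _ _
  set ι : X i → SmallBoxP X pt := fun y => ⟨Function.update pt i y, i + 1, hupdate y⟩ with hι
  have hπι : ∀ y, (ι y).val i = y := fun y => Function.update_self _ _ _
  have hιpt : ι (pt i) = b := by
    apply Subtype.ext
    simp [hι, hb, Function.update_eq_self]
  have hιc : Continuous ι := by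
    rw [show (smallBoxPTop X pt) = TopologicalSpace.induced Subtype.val (boxTopology X) from rfl]
      at *
    refine continuous_induced_rng.2 ?_
    refine continuous_generateFrom_iff.2 ?_
    rintro s ⟨O, hO, rfl⟩
    by_cases hpt : ∀ j, j ≠ i → pt j ∈ O j
    · convert hO i using 1
      ext y
      simp only [Set.mem_preimage, Function.comp_apply, Set.mem_pi, Set.mem_univ,
        forall_true_left]
      constructor
      · intro hy
        have := hy i
        rwa [hπι] at this
      · intro hy j
        rcases eq_or_ne j i with rfl | hji
        · rwa [hπι]
        · rw [show (ι y).val j = pt j from Function.update_of_ne hji _ _]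
          exact hpt j hji
    · convert isOpen_empty
      ext y
      simp only [Set.mem_preimage, Function.comp_apply, Set.mem_pi, Set.mem_univ,
        forall_true_left, Set.mem_empty_iff_false, iff_false]
      intro hy
      push_neg at hpt
      obtain ⟨j, hji, hj⟩ := hpt
      have := hy j
      rw [show (ι y).val j = pt j from Function.update_of_ne hji _ _] at this
      exact hj this
  have hπc : Continuous fun x : SmallBoxP X pt => x.val i := by
    have h1 : Continuous (Subtype.val : SmallBoxP X pt → ∀ j, X j) := continuous_induced_dom
    exact (box_proj_continuous X i).comp h1
  have hbU : (fun x : SmallBoxP X pt => x.val i) ⁻¹' U ∈ nhds b :=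
    hπc.continuousAt.preimage_mem_nhds hU
  obtain ⟨V, hV, hVU, H, hHc, hHU, hH0, hH1, hHfix⟩ := h _ hbU
  refine ⟨ι ⁻¹' V, hιc.continuousAt.preimage_mem_nhds (by rwa [hιpt]), ?_, ?_⟩
  · intro y hy
    have := hVU hy
    simpa [hπι] using this
  · refine ⟨fun p => (H (⟨ι p.1.val, p.1.prop⟩, p.2)).val i, ?_, ?_, ?_, ?_, ?_⟩
    · refine hπc.comp (hHc.comp (Continuous.prodMk ?_ continuous_snd))
      exact Continuous.subtype_mk ((hιc.comp continuous_subtype_val).comp continuous_fst) _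
    · intro y t
      exact hHU _ t
    · intro y
      show (H (⟨ι y.val, y.prop⟩, 0)).val i = y.val
      rw [hH0 ⟨ι y.val, y.prop⟩]
      exact hπι _
    · intro y
      show (H (⟨ι y.val, y.prop⟩, 1)).val i = pt i
      rw [hH1 ⟨ι y.val, y.prop⟩]
    · intro hx t
      have hbV : b ∈ V := by rw [← hιpt]; exact hx
      have heq : (⟨ι (pt i), hx⟩ : V) = ⟨b, hbV⟩ := Subtype.ext hιpt
      show (H (⟨ι (pt i), hx⟩, t)).val i = pt i
      rw [heq, hHfix hbV t]

lemma stmt12_bwd (X : ℕ → Type*) [∀ i, TopologicalSpace (X i)] (pt : ∀ i, X i)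
    (h : ∀ i, StronglyLocallyContractibleAt (pt i)) :
    @StronglyLocallyContractibleAt (SmallBoxP X pt) (smallBoxPTop X pt)
        ⟨pt, 0, fun _ _ => rfl⟩ := by
  classical
  letI := boxTopology X
  letI := smallBoxPTop X pt
  intro U hU
  rw [smallBox_mem_nhds] at hU
  obtain ⟨Uo, hUoOpen, hUomem, hUoU⟩ := hU
  choose V hVnhds hVU H hHc hHU hH0 hH1 hHfix using
    fun i => h i (Uo i) ((hUoOpen i).mem_nhds (hUomem i))
  choose W hWsub hWopen hWmem using fun i => mem_nhds_iff.1 (hVnhds i)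
  set 𝒱 : Set (SmallBoxP X pt) := Subtype.val ⁻¹' Set.pi Set.univ V with h𝒱
  have hmemV : ∀ (x : 𝒱) i, x.val.val i ∈ V i := fun x i => x.prop i trivial
  have hptV : ∀ i, pt i ∈ V i := fun i => mem_of_mem_nhds (hVnhds i)
  have hfix' : ∀ i t, H i (⟨pt i, hptV i⟩, t) = pt i := fun i t => hHfix i (hptV i) t
  have h𝒱nhds : 𝒱 ∈ nhds (⟨pt, 0, fun _ _ => rfl⟩ : SmallBoxP X pt) := by
    rw [smallBox_mem_nhds]
    exact ⟨W, hWopen, fun i => hWmem i, fun y hy i hi => hWsub i (hy i hi)⟩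
  have h𝒱U : 𝒱 ⊆ U := fun x hx => hUoU (fun i _ => hVU i (hx i trivial))
  set G : 𝒱 × unitInterval → ∀ i, X i :=
    fun p i => H i (⟨p.1.val.val i, hmemV p.1 i⟩, p.2) with hG
  have hGsmall : ∀ p, ∃ N, ∀ i ≥ N, G p i = pt i := by
    rintro p
    obtain ⟨N, hN⟩ := p.1.val.prop
    refine ⟨N, fun i hi => ?_⟩
    have heq : (⟨p.1.val.val i, hmemV p.1 i⟩ : V i) = ⟨pt i, hptV i⟩ :=
      Subtype.ext (hN i hi)
    show H i (⟨p.1.val.val i, hmemV p.1 i⟩, p.2) = pt i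
    rw [heq]
    exact hfix' i p.2
  refine ⟨𝒱, h𝒱nhds, h𝒱U, fun p => ⟨G p, hGsmall p⟩, ?_, ?_, ?_, ?_, ?_⟩
  · -- continuity
    rw [show (smallBoxPTop X pt) = TopologicalSpace.induced Subtype.val (boxTopology X) from rfl]
    rw [continuous_induced_rng]
    refine continuous_generateFrom_iff.2 ?_
    rintro s ⟨O, hOopen, rfl⟩
    rw [isOpen_iff_mem_nhds]
    rintro ⟨x, t₀⟩ hmem
    simp only [Set.mem_preimage, Function.comp_apply, Set.mem_pi, Set.mem_univ,
      forall_true_left] at hmem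
    have hmem' : ∀ i, H i (⟨x.val.val i, hmemV x i⟩, t₀) ∈ O i := fun i => hmem i
    obtain ⟨N, hN⟩ := x.val.prop
    -- tube lemma for coordinates where pt i ∈ O i
    have htube : ∀ i, pt i ∈ O i → ∃ B : Set (X i), IsOpen B ∧ pt i ∈ B ∧
        ∀ (y : V i), y.val ∈ B → ∀ t, H i (y, t) ∈ O i := by
      intro i hptO
      have hopen : IsOpen (H i ⁻¹' O i) := (hHc i).isOpen_preimage _ (hOopen i)
      have hsub : ({(⟨pt i, hptV i⟩ : V i)} ×ˢ (Set.univ : Set unitInterval)) ⊆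
          H i ⁻¹' O i := by
        rintro ⟨y, t⟩ ⟨hy, -⟩
        simp only [Set.mem_singleton_iff] at hy
        subst hy
        show H i (⟨pt i, hptV i⟩, t) ∈ O i
        rw [hfix' i t]
        exact hptO
      obtain ⟨u, v, huo, hvo, hsu, htv, huv⟩ :=
        generalized_tube_lemma isCompact_singleton isCompact_univ hopen hsub
      obtain ⟨B, hBo, hBu⟩ := isOpen_induced_iff.1 huo
      refine ⟨B, hBo, ?_, ?_⟩
      · have hmu : (⟨pt i, hptV i⟩ : V i) ∈ u := hsu rfl
        rw [← hBu] at hmu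
        exact hmu
      · intro y hyB t
        refine huv ⟨?_, htv trivial⟩
        rw [← hBu]
        exact hyB
    have hptO : ∀ i, N ≤ i → pt i ∈ O i := by
      intro i hi
      have heq : (⟨x.val.val i, hmemV x i⟩ : V i) = ⟨pt i, hptV i⟩ := Subtype.ext (hN i hi)
      have hh := hmem' i
      rw [heq, hfix'] at hh
      exact hh
    choose B hBo hBmem hBprop using fun i (hi : N ≤ i) => htube i (hptO i hi)
    -- rectangles for all coordinates
    have hrect : ∀ i, ∃ (A : Set (X i)) (Jt : Set unitInterval), IsOpen A ∧ IsOpen Jt ∧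
        x.val.val i ∈ A ∧ t₀ ∈ Jt ∧
        ∀ (y : V i), y.val ∈ A → ∀ t ∈ Jt, H i (y, t) ∈ O i := by
      intro i
      have hn : H i ⁻¹' O i ∈ nhds ((⟨x.val.val i, hmemV x i⟩ : V i), t₀) :=
        ((hHc i).isOpen_preimage _ (hOopen i)).mem_nhds (hmem' i)
      rw [mem_nhds_prod_iff] at hn
      obtain ⟨u, hu, v, hv, huv⟩ := hn
      obtain ⟨u', hu'sub, hu'o, hxu'⟩ := mem_nhds_iff.1 hu
      obtain ⟨Jt, hJsub, hJo, htJ⟩ := mem_nhds_iff.1 hv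
      obtain ⟨A, hAo, hAu'⟩ := isOpen_induced_iff.1 hu'o
      refine ⟨A, Jt, hAo, hJo, ?_, htJ, ?_⟩
      · rw [← hAu'] at hxu'
        exact hxu'
      · intro y hyA t ht
        refine huv ⟨hu'sub ?_, hJsub ht⟩
        rw [← hAu']
        exact hyA
    choose A Jt hAo hJto hxA htJt hAprop using hrect
    set C : ∀ i, Set (X i) := fun i => if hi : N ≤ i then B i hi else A i with hC
    have hCo : ∀ i, IsOpen (C i) := by
      intro i
      by_cases hi : N ≤ i
      · rw [hC]; simp only [dif_pos hi]; exact hBo i hi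
      · rw [hC]; simp only [dif_neg hi]; exact hAo i
    set Jset : Set unitInterval := ⋂ i ∈ Finset.range N, Jt i with hJset
    have hJseto : IsOpen Jset := isOpen_biInter_finset (fun i _ => hJto i)
    have htJset : t₀ ∈ Jset := Set.mem_iInter₂.2 fun i _ => htJt i
    set P : Set (𝒱 × unitInterval) :=
      (fun p : 𝒱 × unitInterval => p.1.val.val) ⁻¹' Set.pi Set.univ C ∩
        (fun p : 𝒱 × unitInterval => p.2) ⁻¹' Jset with hP
    have hvalc : Continuous (fun p : 𝒱 × unitInterval => p.1.val.val) := by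
      have h1 : Continuous (Subtype.val : 𝒱 → SmallBoxP X pt) := continuous_subtype_val
      have h2 : Continuous (Subtype.val : SmallBoxP X pt → ∀ j, X j) := continuous_induced_dom
      exact (h2.comp h1).comp continuous_fst
    have hPopen : IsOpen P := by
      refine IsOpen.inter (hvalc.isOpen_preimage _ ?_) (continuous_snd.isOpen_preimage _ hJseto)
      exact TopologicalSpace.GenerateOpen.basic _ ⟨C, hCo, rfl⟩
    have hPmem : (x, t₀) ∈ P := by
      refine ⟨fun i _ => ?_, htJset⟩
      by_cases hi : N ≤ i
      · rw [hC]; simp only [dif_pos hi]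
        rw [hN i hi]
        exact hBmem i hi
      · rw [hC]; simp only [dif_neg hi]
        exact hxA i
    refine Filter.mem_of_superset (hPopen.mem_nhds hPmem) ?_
    rintro ⟨y, t⟩ ⟨hyC, htJ⟩
    intro i _
    show H i (⟨y.val.val i, hmemV y i⟩, t) ∈ O i
    by_cases hi : N ≤ i
    · refine hBprop i hi _ ?_ t
      have := hyC i trivial
      rw [hC] at this; simpa only [dif_pos hi] using this
    · refine hAprop i _ ?_ t ?_
      · have := hyC i trivial
        rw [hC] at this; simpa only [dif_neg hi] using this
      · exact Set.mem_iInter₂.1 htJ i (Finset.mem_range.2 (by omega))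
  · intro y t
    exact hUoU fun i _ => hHU i _ t
  · intro y
    apply Subtype.ext
    funext i
    exact hH0 i ⟨y.val.val i, hmemV y i⟩
  · intro y
    apply Subtype.ext
    funext i
    exact hH1 i ⟨y.val.val i, hmemV y i⟩
  · intro hx t
    apply Subtype.ext
    funext i
    show H i (⟨pt i, _⟩, t) = pt i
    exact hHfix i _ t

/-- the small box product `⊡ᵢ (Xᵢ, xᵢ)` is strongly locally
contractible at its base point iff each `Xᵢ` is strongly locally contractible
at `xᵢ`. -/
theorem stmt12 (X : ℕ → Type*) [∀ i, TopologicalSpace (X i)] (pt : ∀ i, X i) :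
    @StronglyLocallyContractibleAt (SmallBoxP X pt) (smallBoxPTop X pt)
        ⟨pt, 0, fun _ _ => rfl⟩ ↔
      ∀ i, StronglyLocallyContractibleAt (pt i) := by
  exact ⟨stmt12_fwd X pt, stmt12_bwd X pt⟩
end

section
/- Let X be a compact metrizable space, K and L disjoint compact subsets of X, and Y an absolute retract (AR). Then for any continuous map f : X → Y there exists a continuous map s : C(K,Y) → C(X,Y) (compact-open topologies) such that for all g ∈ C(K,Y): s(g)|K = g, s(g)|L = f|L, and s(f|K) = f. -/
universe u

/-- An absolute retract (AR): a metrizable space `Y` such that every continuous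
map into `Y` from a closed subset of a metrizable space extends over the whole
space. -/
def IsAR (Y : Type u) [TopologicalSpace Y] : Prop :=
  TopologicalSpace.MetrizableSpace Y ∧
    ∀ (Z : Type u) [TopologicalSpace Z], TopologicalSpace.MetrizableSpace Z →
      ∀ A : Set Z, IsClosed A → ∀ g : C(A, Y), ∃ G : C(Z, Y), ∀ a : A, G a = g a

/-- Pasting lemma: a map continuous on two closed sets is continuous on their
union. -/
lemma continuousOn_union_of_isClosed {α β : Type*} [TopologicalSpace α]
    [TopologicalSpace β] {f : α → β} {s t : Set α}
    (hs : IsClosed s) (ht : IsClosed t)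
    (hfs : ContinuousOn f s) (hft : ContinuousOn f t) :
    ContinuousOn f (s ∪ t) := by
  intro x hx
  apply ContinuousWithinAt.union
  · by_cases hxs : x ∈ s
    · exact hfs x hxs
    · exact continuousWithinAt_of_notMem_closure (by rwa [hs.closure_eq])
  · by_cases hxt : x ∈ t
    · exact hft x hxt
    · exact continuousWithinAt_of_notMem_closure (by rwa [ht.closure_eq])

/-- for X compact metrizable, K, L disjoint compact subsets and Y
an AR, every `f ∈ C(X,Y)` admits a continuous map `s : C(K,Y) → C(X,Y)`
(compact-open topologies) with `s(g)|K = g`, `s(g)|L = f|L` and `s(f|K) = f`. -/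
theorem stmt13 {X : Type u} [TopologicalSpace X] [CompactSpace X]
    [TopologicalSpace.MetrizableSpace X]
    {Y : Type u} [TopologicalSpace Y] (hY : IsAR Y)
    (K L : Set X) (hK : IsCompact K) (hL : IsCompact L) (hKL : Disjoint K L)
    (f : C(X, Y)) :
    ∃ s : C(C(K, Y), C(X, Y)),
      (∀ g : C(K, Y), ∀ k : K, s g k = g k) ∧
      (∀ g : C(K, Y), ∀ l ∈ L, s g l = f l) ∧
      s (f.restrict K) = f := by
  classical
  obtain ⟨hYm, hExt⟩ := hY
  letI : TopologicalSpace.MetrizableSpace Y := hYm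
  letI : MetricSpace Y := TopologicalSpace.metrizableSpaceMetric Y
  haveI : CompactSpace K := isCompact_iff_compactSpace.mp hK
  -- the ambient space and the closed set where the map is prescribed
  let φ : X × C(K, Y) → Y := fun p => if hx : p.1 ∈ K then p.2 ⟨p.1, hx⟩ else f p.1
  let A : Set (X × C(K, Y)) :=
    ((K ∪ L) ×ˢ (Set.univ : Set C(K, Y))) ∪ ((Set.univ : Set X) ×ˢ {f.restrict K})
  have hKc : IsClosed K := hK.isClosed
  have hLc : IsClosed L := hL.isClosed
  have hA : IsClosed A :=
    ((hKc.union hLc).prod isClosed_univ).union (isClosed_univ.prod isClosed_singleton)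
  -- continuity of φ on A
  have hφK : ContinuousOn φ (K ×ˢ (Set.univ : Set C(K, Y))) := by
    have hcont : Continuous fun q : K × C(K, Y) => q.2 q.1 :=
      continuous_eval.comp (continuous_swap)
    rw [continuousOn_iff_continuous_restrict]
    have : ∀ p : (K ×ˢ (Set.univ : Set C(K, Y)) : Set (X × C(K, Y))),
        (K ×ˢ (Set.univ : Set C(K, Y))).domRestrict φ p
          = (p : X × C(K, Y)).2 ⟨(p : X × C(K, Y)).1, p.2.1⟩ := by
      intro p
      simp only [Set.domRestrict_apply, φ, dif_pos p.2.1]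
    rw [show (K ×ˢ (Set.univ : Set C(K, Y))).domRestrict φ
        = fun p : (K ×ˢ (Set.univ : Set C(K, Y)) : Set (X × C(K, Y))) =>
          (fun q : K × C(K, Y) => q.2 q.1)
            (⟨(p : X × C(K, Y)).1, p.2.1⟩, (p : X × C(K, Y)).2) from funext this]
    exact hcont.comp (by fun_prop)
  have hφL : ContinuousOn φ (L ×ˢ (Set.univ : Set C(K, Y))) := by
    have : ∀ p ∈ L ×ˢ (Set.univ : Set C(K, Y)), φ p = f p.1 := by
      intro p hp
      have hpK : p.1 ∉ K := fun h => hKL.le_bot ⟨h, hp.1⟩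
      simp only [φ, dif_neg hpK]
    exact ((f.continuous.comp continuous_fst).continuousOn).congr this
  have hφS : ContinuousOn φ ((Set.univ : Set X) ×ˢ {f.restrict K}) := by
    have : ∀ p ∈ (Set.univ : Set X) ×ˢ ({f.restrict K} : Set C(K, Y)), φ p = f p.1 := by
      intro p hp
      have hp2 : p.2 = f.restrict K := hp.2
      by_cases hx : p.1 ∈ K
      · simp only [φ, dif_pos hx, hp2, ContinuousMap.restrict_apply]
      · simp only [φ, dif_neg hx]
    exact ((f.continuous.comp continuous_fst).continuousOn).congr this
  have hφ : ContinuousOn φ A := by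
    have h1 : (K ∪ L) ×ˢ (Set.univ : Set C(K, Y))
        = (K ×ˢ (Set.univ : Set C(K, Y))) ∪ (L ×ˢ (Set.univ : Set C(K, Y))) := by
      rw [Set.union_prod]
    refine continuousOn_union_of_isClosed ((hKc.union hLc).prod isClosed_univ)
      (isClosed_univ.prod isClosed_singleton) ?_ hφS
    rw [h1]
    exact continuousOn_union_of_isClosed (hKc.prod isClosed_univ) (hLc.prod isClosed_univ)
      hφK hφL
  -- extend over the whole product using the AR property
  obtain ⟨G, hG⟩ := hExt (X × C(K, Y)) inferInstance A hA
    ⟨A.restrict φ, continuousOn_iff_continuous_restrict.mp hφ⟩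
  have hGφ : ∀ p : X × C(K, Y), p ∈ A → G p = φ p := fun p hp => hG ⟨p, hp⟩
  refine ⟨(G.comp ⟨Prod.swap, continuous_swap⟩).curry, ?_, ?_, ?_⟩
  · intro g k
    have hk : ((k : X), g) ∈ A := Or.inl ⟨Or.inl k.2, trivial⟩
    have := hGφ _ hk
    simpa only [ContinuousMap.curry_apply, ContinuousMap.comp_apply, ContinuousMap.coe_mk, Prod.swap_prod_mk, φ, dif_pos k.2, Subtype.coe_eta] using this
  · intro g l hl
    have hlA : ((l : X), g) ∈ A := Or.inl ⟨Or.inr hl, trivial⟩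
    have hlK : l ∉ K := fun h => hKL.le_bot ⟨h, hl⟩
    have := hGφ _ hlA
    simpa only [ContinuousMap.curry_apply, ContinuousMap.comp_apply, ContinuousMap.coe_mk, Prod.swap_prod_mk, φ, dif_neg hlK] using this
  · ext x
    have hxA : (x, f.restrict K) ∈ A := Or.inr ⟨trivial, rfl⟩
    have := hGφ _ hxA
    by_cases hx : x ∈ K
    · simpa only [ContinuousMap.curry_apply, ContinuousMap.comp_apply, ContinuousMap.coe_mk, Prod.swap_prod_mk, φ, dif_pos hx, ContinuousMap.restrict_apply] using this
    · simpa only [ContinuousMap.curry_apply, ContinuousMap.comp_apply, ContinuousMap.coe_mk, Prod.swap_prod_mk, φ, dif_neg hx] using this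
end

section
/- Let X be a compact metrizable space, K, L disjoint compact subsets, and Y an ANR. For any continuous f : X → Y there exist a neighborhood 𝒰 of f|K in C(K,Y) (compact-open topology) and a continuous map s : 𝒰 → C(X,Y) such that s(g)|K = g and s(g)|L = f|L for all g ∈ 𝒰, and s(f|K) = f. -/
universe u

/-- An absolute neighborhood retract (ANR): a metrizable space `Y` such that
every continuous map into `Y` from a closed subset `A` of a metrizable space
extends continuously over some open neighborhood of `A`. -/
def IsANR (Y : Type u) [TopologicalSpace Y] : Prop :=
  TopologicalSpace.MetrizableSpace Y ∧
    ∀ (Z : Type u) [TopologicalSpace Z], TopologicalSpace.MetrizableSpace Z →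
      ∀ A : Set Z, IsClosed A → ∀ g : C(A, Y),
        ∃ W : Set Z, IsOpen W ∧ A ⊆ W ∧
          ∃ G : C(W, Y), ∀ (a : Z) (ha : a ∈ A) (haW : a ∈ W), G ⟨a, haW⟩ = g ⟨a, ha⟩

/-- for X compact metrizable, K, L disjoint compact subsets and Y
an ANR, every `f ∈ C(X,Y)` admits a neighborhood `U` of `f|K` in `C(K,Y)` and a
continuous map `s : U → C(X,Y)` with `s(g)|K = g`, `s(g)|L = f|L` for `g ∈ U`,
and `s(f|K) = f`. -/
theorem stmt14 {X : Type u} [TopologicalSpace X] [CompactSpace X]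
    [TopologicalSpace.MetrizableSpace X]
    {Y : Type u} [TopologicalSpace Y] (hY : IsANR Y)
    (K L : Set X) (hK : IsCompact K) (hL : IsCompact L) (hKL : Disjoint K L)
    (f : C(X, Y)) :
    ∃ U : Set C(K, Y), U ∈ nhds (f.restrict K) ∧
      ∃ s : C(U, C(X, Y)),
        (∀ g : U, ∀ k : K, s g k = (g : C(K, Y)) k) ∧
        (∀ g : U, ∀ l ∈ L, s g l = f l) ∧
        ∀ hf : f.restrict K ∈ U, s ⟨f.restrict K, hf⟩ = f := by
  classical
  obtain ⟨hmet, hext⟩ := hY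
  haveI := hmet
  haveI : CompactSpace K := isCompact_iff_compactSpace.mp hK
  letI : MetricSpace Y := TopologicalSpace.metrizableSpaceMetric Y
  set F : C(K, Y) × X → Y := fun p => if hx : p.2 ∈ K then p.1 ⟨p.2, hx⟩ else f p.2 with hF
  set A2 : Set (C(K, Y) × X) := Set.univ ×ˢ K with hA2
  set B : Set (C(K, Y) × X) := ({f.restrict K} ×ˢ Set.univ) ∪ (Set.univ ×ˢ L) with hB
  set A : Set (C(K, Y) × X) := A2 ∪ B with hA
  have hA2closed : IsClosed A2 := isClosed_univ.prod hK.isClosed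
  have hBclosed : IsClosed B :=
    ((isClosed_singleton).prod isClosed_univ).union (isClosed_univ.prod hL.isClosed)
  have hAclosed : IsClosed A := hA2closed.union hBclosed
  have hcont2 : ContinuousOn F A2 := by
    rw [continuousOn_iff_continuous_restrict]
    have heq : A2.domRestrict F = fun p : A2 => (p.1.1) ⟨p.1.2, p.2.2⟩ := by
      funext p
      simp only [Set.domRestrict, hF]
      rw [dif_pos p.2.2]
    rw [heq]
    exact ContinuousEval.continuous_eval.comp
      ((continuous_fst.comp continuous_subtype_val).prodMk
        ((continuous_snd.comp continuous_subtype_val).subtype_mk _))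
  have hcontB : ContinuousOn F B := by
    rw [continuousOn_iff_continuous_restrict]
    have heq : B.domRestrict F = fun p : B => f p.1.2 := by
      funext p
      simp only [Set.domRestrict, hF]
      split_ifs with hx
      · rcases p.2 with h | h
        · have : p.1.1 = f.restrict K := h.1
          rw [this]; rfl
        · exact absurd hx (Set.disjoint_right.mp hKL h.2)
      · rfl
    rw [heq]
    exact f.continuous.comp (continuous_snd.comp continuous_subtype_val)
  have hcontA : ContinuousOn F A := by
    intro x hx
    have h2 : ContinuousWithinAt F A2 x := by
      by_cases h : x ∈ A2
      · exact hcont2 x h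
      · exact continuousWithinAt_of_notMem_closure (by rwa [hA2closed.closure_eq])
    have hb : ContinuousWithinAt F B x := by
      by_cases h : x ∈ B
      · exact hcontB x h
      · exact continuousWithinAt_of_notMem_closure (by rwa [hBclosed.closure_eq])
    exact h2.union hb
  obtain ⟨W, hWopen, hAW, G, hG⟩ :=
    hext (C(K, Y) × X) inferInstance A hAclosed
      ⟨A.restrict F, continuousOn_iff_continuous_restrict.mp hcontA⟩
  have hfW : ({f.restrict K} : Set C(K, Y)) ×ˢ (Set.univ : Set X) ⊆ W :=
    fun p hp => hAW (Or.inr (Or.inl hp))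
  obtain ⟨u, v, hu, hv, hsu, htv, huv⟩ :=
    generalized_tube_lemma isCompact_singleton CompactSpace.isCompact_univ hWopen hfW
  have hsub : ∀ (g : C(K, Y)), g ∈ u → ∀ x : X, (g, x) ∈ W := by
    intro g hg x
    exact huv ⟨hg, htv (Set.mem_univ x)⟩
  refine ⟨u, hu.mem_nhds (hsu rfl), ?_⟩
  set Φ : C(u × X, Y) :=
    ⟨fun p => G ⟨(p.1.1, p.2), hsub p.1.1 p.1.2 p.2⟩,
      G.continuous.comp
        (((continuous_subtype_val.comp continuous_fst).prodMk continuous_snd).subtype_mk _)⟩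
    with hΦ
  refine ⟨ContinuousMap.curry Φ, ?_, ?_, ?_⟩
  · intro g k
    have hmemA : ((g : C(K, Y)), (k : X)) ∈ A := Or.inl ⟨Set.mem_univ _, k.2⟩
    have := hG ((g : C(K, Y)), (k : X)) hmemA (hsub g g.2 k)
    simp only [ContinuousMap.curry_apply, hΦ, ContinuousMap.coe_mk]
    rw [this]
    show F ((g : C(K, Y)), (k : X)) = _
    simp only [hF]
    rw [dif_pos k.2]
  · intro g l hl
    have hmemA : ((g : C(K, Y)), l) ∈ A := Or.inr (Or.inr ⟨Set.mem_univ _, hl⟩)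
    have := hG ((g : C(K, Y)), l) hmemA (hsub g g.2 l)
    simp only [ContinuousMap.curry_apply, hΦ, ContinuousMap.coe_mk]
    rw [this]
    show F ((g : C(K, Y)), l) = _
    simp only [hF]
    rw [dif_neg (Set.disjoint_right.mp hKL hl)]
  · intro hf
    ext x
    have hmemA : (f.restrict K, x) ∈ A := Or.inr (Or.inl ⟨rfl, Set.mem_univ _⟩)
    have := hG (f.restrict K, x) hmemA (hsub _ hf x)
    simp only [ContinuousMap.curry_apply, hΦ, ContinuousMap.coe_mk]
    rw [this]
    show F (f.restrict K, x) = _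
    simp only [hF]
    split_ifs with hx
    · rfl
    · rfl
end

section
/- Every subspace of a perfectly paracompact space is perfectly paracompact. -/
open Set Topology

/-- A space is perfectly paracompact if it is paracompact Hausdorff and every
open subset is an Fσ-set. -/
def PerfectlyParacompact (X : Type*) [TopologicalSpace X] : Prop :=
  ParacompactSpace X ∧ T2Space X ∧
    ∀ U : Set X, IsOpen U → ∃ F : ℕ → Set X, (∀ n, IsClosed (F n)) ∧ U = ⋃ n, F n

lemma key {X : Type*} [TopologicalSpace X] (h : PerfectlyParacompact X)
    {ι : Type*} (A : Set X) (v : ι → Set X) (hvo : ∀ i, IsOpen (v i))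
    (hA : A ⊆ ⋃ i, v i) :
    ∃ w : ι → Set X, (∀ i, IsOpen (w i)) ∧ A ⊆ ⋃ i, w i ∧ (∀ i, w i ⊆ v i) ∧
      ∀ x ∈ A, ∃ t ∈ 𝓝 x, {i | (w i ∩ t).Nonempty}.Finite := by
  classical
  obtain ⟨hpara, ht2, hfsig⟩ := h
  haveI := hpara; haveI := ht2
  set U : Set X := ⋃ i, v i with hU
  have hUo : IsOpen U := isOpen_iUnion hvo
  obtain ⟨F₀, hF₀c, hF₀U⟩ := hfsig U hUo
  -- make the Fσ sequence monotone
  set F : ℕ → Set X := fun n => ⋃ k ≤ n, F₀ k with hF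
  have hFc : ∀ n, IsClosed (F n) := fun n =>
    Set.Finite.isClosed_biUnion (Set.finite_Iic n) (fun k _ => hF₀c k)
  have hFU : ∀ n, F n ⊆ U := fun n => by
    rw [hF₀U]; exact iUnion₂_subset fun k _ => subset_iUnion _ k
  have hUF : U ⊆ ⋃ n, F n := by
    rw [hF₀U]
    intro x hx
    obtain ⟨k, hk⟩ := mem_iUnion.1 hx
    exact mem_iUnion.2 ⟨k, mem_iUnion₂.2 ⟨k, le_rfl, hk⟩⟩
  -- construct V : ℕ → Set X with F n ⊆ V n, closure (V n) ⊆ V (n+1) ⊆ U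
  obtain ⟨u0, hu0o, hu0s, hu0c⟩ :=
    normal_exists_closure_subset (hFc 0) hUo (hFU 0)
  have hrec : ∀ n : ℕ, ∀ s : Set X, closure s ⊆ U →
      ∃ u : Set X, IsOpen u ∧ (F (n+1) ∪ closure s) ⊆ u ∧ closure u ⊆ U := fun n s hs =>
    normal_exists_closure_subset ((hFc (n+1)).union isClosed_closure) hUo
      (union_subset (hFU (n+1)) hs)
  choose! g hg1 hg2 hg3 using hrec
  let T := {s : Set X // closure s ⊆ U}
  let step : ℕ → T → T := fun n s => ⟨g n s.1, hg3 n s.1 s.2⟩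
  let Vt : ℕ → T := fun n => Nat.rec ⟨u0, hu0c⟩ step n
  let V : ℕ → Set X := fun n => (Vt n).1
  have hVsucc : ∀ n, V (n+1) = g n (V n) := fun n => rfl
  have hVclU : ∀ n, closure (V n) ⊆ U := fun n => (Vt n).2
  have hVo : ∀ n, IsOpen (V n) := by
    intro n; cases n with
    | zero => exact hu0o
    | succ n => rw [hVsucc]; exact hg1 n (V n) (hVclU n)
  have hVF : ∀ n, F n ⊆ V n := by
    intro n; cases n with
    | zero => exact hu0s
    | succ n =>
      rw [hVsucc]
      exact subset_union_left.trans (hg2 n (V n) (hVclU n))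
  have hVcl : ∀ n, closure (V n) ⊆ V (n+1) := fun n => by
    rw [hVsucc]
    exact subset_union_right.trans (hg2 n (V n) (hVclU n))
  have hVmono : Monotone V := monotone_nat_of_le_succ fun n =>
    (subset_closure.trans (hVcl n))
  -- for each n, a locally finite precise refinement covering closure (V n)
  have hcov : ∀ n : ℕ, closure (V n) ⊆ ⋃ i, v i ∩ V (n+1) := by
    intro n x hx
    have hxU : x ∈ U := hVclU n hx
    obtain ⟨i, hi⟩ := mem_iUnion.1 hxU
    exact mem_iUnion.2 ⟨i, hi, hVcl n hx⟩
  have hW := fun n => precise_refinement_set (isClosed_closure (s := V n))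
    (fun i => v i ∩ V (n+1)) (fun i => (hvo i).inter (hVo (n+1))) (hcov n)
  choose W hWo hWcov hWlf hWsub using hW
  -- the subtracted sets
  let D : ℕ → Set X := fun n => Nat.casesOn n ∅ (fun m => Nat.casesOn m ∅ (fun k => closure (V k)))
  have hDc : ∀ n, IsClosed (D n) := by
    intro n
    match n with
    | 0 => exact isClosed_empty
    | 1 => exact isClosed_empty
    | (k+2) => exact isClosed_closure
  have hDsub : ∀ n x, 2 ≤ n → x ∉ V (n - 1) → x ∉ D n := by
    intro n x hn hx
    obtain ⟨k, rfl⟩ : ∃ k, n = k + 2 := ⟨n - 2, by omega⟩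
    intro hxd
    exact hx (hVcl k hxd)
  have hVD : ∀ n m, n + 2 ≤ m → V n ⊆ D m := by
    intro n m hm
    obtain ⟨k, rfl⟩ : ∃ k, m = k + 2 := ⟨m - 2, by omega⟩
    exact (hVmono (by omega : n ≤ k)).trans subset_closure
  -- final family
  refine ⟨fun i => ⋃ n, (W n i \ D n), ?_, ?_, ?_, ?_⟩
  · exact fun i => isOpen_iUnion fun n => (hWo n i).sdiff (hDc n)
  · -- covers A
    intro x hx
    have hxU : x ∈ U := hA hx
    have hex : ∃ n, x ∈ V n := by
      obtain ⟨n, hn⟩ := mem_iUnion.1 (hUF hxU)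
      exact ⟨n, hVF n hn⟩
    let n := Nat.find hex
    have hxn : x ∈ V n := Nat.find_spec hex
    obtain ⟨i, hi⟩ := mem_iUnion.1 (hWcov n (subset_closure hxn))
    refine mem_iUnion.2 ⟨i, mem_iUnion.2 ⟨n, hi, ?_⟩⟩
    by_cases h2 : 2 ≤ n
    · exact hDsub n x h2 (Nat.find_min hex (by omega))
    · interval_cases n <;> exact notMem_empty x
  · -- refinement
    intro i x hx
    obtain ⟨n, hn, -⟩ := mem_iUnion.1 hx
    exact (hWsub n i hn).1
  · -- local finiteness on A
    intro x hx
    have hxU : x ∈ U := hA hx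
    obtain ⟨n, hn⟩ : ∃ n, x ∈ V n := by
      obtain ⟨n, hn⟩ := mem_iUnion.1 (hUF hxU)
      exact ⟨n, hVF n hn⟩
    choose t ht htf using fun m => hWlf m x
    refine ⟨V n ∩ ⋂ m ∈ Finset.range (n+2), t m, ?_, ?_⟩
    · refine Filter.inter_mem ((hVo n).mem_nhds hn) ?_
      exact (Filter.biInter_finset_mem _).2 fun m _ => ht m
    · apply Set.Finite.subset (Set.Finite.biUnion (Finset.range (n+2)).finite_toSet
        (fun m _ => htf m))
      rintro i ⟨y, hyw, hyt⟩
      obtain ⟨m, hym, hyD⟩ := mem_iUnion.1 hyw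
      have hyV : y ∈ V n := hyt.1
      have hmlt : m < n + 2 := by
        by_contra hge
        exact hyD (hVD n m (by omega) hyV)
      refine mem_iUnion₂.2 ⟨m, Finset.mem_coe.2 (Finset.mem_range.2 hmlt), ?_⟩
      exact ⟨y, hym, (mem_iInter₂.1 hyt.2) m (Finset.mem_range.2 hmlt)⟩

/-- every subspace of a perfectly paracompact space is perfectly
paracompact. -/
theorem stmt18 {X : Type*} [TopologicalSpace X] (h : PerfectlyParacompact X)
    (A : Set X) : PerfectlyParacompact A := by
  obtain ⟨hpara, ht2, hfsig⟩ := h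
  haveI := hpara; haveI := ht2
  refine ⟨?_, inferInstance, ?_⟩
  · -- paracompactness of the subspace
    constructor
    intro α s hso hsc
    choose v hvo hvp using fun a => isOpen_induced_iff.1 (hso a)
    have hA : A ⊆ ⋃ a, v a := by
      intro x hx
      have : (⟨x, hx⟩ : A) ∈ ⋃ a, s a := hsc ▸ mem_univ _
      obtain ⟨a, ha⟩ := mem_iUnion.1 this
      rw [← hvp a] at ha
      exact mem_iUnion.2 ⟨a, ha⟩
    obtain ⟨w, hwo, hwA, hwsub, hlf⟩ := key ⟨hpara, ht2, hfsig⟩ A v hvo hA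
    refine ⟨α, fun a => Subtype.val ⁻¹' w a, fun a => (hwo a).preimage continuous_subtype_val,
      ?_, ?_, fun a => ⟨a, ?_⟩⟩
    · rw [eq_univ_iff_forall]
      rintro ⟨x, hx⟩
      obtain ⟨a, ha⟩ := mem_iUnion.1 (hwA hx)
      exact mem_iUnion.2 ⟨a, ha⟩
    · rintro ⟨x, hx⟩
      obtain ⟨t, ht, htf⟩ := hlf x hx
      refine ⟨Subtype.val ⁻¹' t, continuous_subtype_val.continuousAt.preimage_mem_nhds ht, ?_⟩
      refine htf.subset ?_
      rintro a ⟨y, hyw, hyt⟩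
      exact ⟨y.1, hyw, hyt⟩
    · rw [← hvp a]
      exact preimage_mono (hwsub a)
  · -- open subsets of the subspace are Fσ
    intro Uu hUu
    obtain ⟨V, hVo, hVp⟩ := isOpen_induced_iff.1 hUu
    obtain ⟨F, hFc, hFV⟩ := hfsig V hVo
    refine ⟨fun n => Subtype.val ⁻¹' F n, fun n => (hFc n).preimage continuous_subtype_val, ?_⟩
    rw [← preimage_iUnion, ← hFV, hVp]
end
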